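/- arXiv:2012.02617 — 4 statements merged into one kernel-verified Lean document; each statement's English description precedes it below -/
import Mathlib

section
/- Let m, n be positive integers and let r = (r_1, …, r_m) be integers with 0 ≤ r_i ≤ n for all i, with conjugate tuple d = (d_1, …, d_n) defined by d_j = |{i ∈ [m] : r_i ≥ j}|. Let c = (c_1, …, c_n) be a nonincreasing tuple of nonnegative integers. Then there exists a matrix A ∈ {0,1}^{m×n} with row sums r_i(A) = r_i for all i ∈ [m] and column sums c_j(A) = c_j for all j ∈ [n] if and only if c is majorized by d, i.e., ∑_{j=1}^k c_j ≤ ∑_{j=1}^k d_j for every k ∈ [n] and ∑_{j=1}^n c_j = ∑_{j=1}^n d_j. -/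
open Finset

/-- Cardinality of an initial segment of `Fin n`. -/
lemma GR_fincard (n l : ℕ) : (univ.filter (fun j : Fin n => j.1 < l)).card = min l n := by
  rw [Finset.card_filter]
  rw [Fin.sum_univ_eq_sum_range (fun j => if j < l then 1 else 0) n]
  rw [← Finset.card_filter]
  have : (range n).filter (· < l) = range (min l n) := by
    ext x; simp [Nat.lt_min, and_comm]
  rw [this, Finset.card_range]

/-- Sum over an initial segment of `Fin n` versus a `range` sum of the ℕ-extension. -/
lemma GR_sum_conv (n l : ℕ) (hl : l ≤ n) (f : Fin n → ℕ) (F : ℕ → ℕ)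
    (hF : ∀ j : Fin n, F j.1 = f j) :
    ∑ j ∈ univ.filter (fun j : Fin n => j.1 < l), f j = ∑ j ∈ range l, F j := by
  rw [Finset.sum_filter]
  have h1 : (∑ j : Fin n, if j.1 < l then f j else 0)
      = ∑ j : Fin n, (fun j => if j < l then F j else 0) j.1 := by
    apply Finset.sum_congr rfl
    intro x _
    simp only [hF x]
  rw [h1, Fin.sum_univ_eq_sum_range (fun j => if j < l then F j else 0) n,
    ← Finset.sum_filter]
  have : (range n).filter (· < l) = range l := by
    ext x; simp [mem_filter, mem_range]; omega
  rw [this]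

lemma GR_sum_conv_univ (n : ℕ) (f : Fin n → ℕ) (F : ℕ → ℕ)
    (hF : ∀ j : Fin n, F j.1 = f j) :
    ∑ j, f j = ∑ j ∈ range n, F j := by
  have := GR_sum_conv n n le_rfl f F hF
  simpa using this

/-- Down-closed sets given by thresholds on an antitone function. -/
lemma GR_downset (f : ℕ → ℕ) (hf : ∀ a b : ℕ, a ≤ b → f b ≤ f a) (s n : ℕ)
    (hb : ∀ j, s < f j → j < n) (j : ℕ) :
    s < f j ↔ j < ((range n).filter (fun j => s < f j)).card := by
  constructor
  · intro h
    have hsub : range (j+1) ⊆ (range n).filter (fun j => s < f j) := by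
      intro x hx
      rw [mem_range] at hx
      have hfx : s < f x := lt_of_lt_of_le h (hf x j (by omega))
      simp [mem_filter, mem_range, hfx, hb x hfx]
    have := Finset.card_le_card hsub
    simpa using this
  · intro h
    by_contra hc
    have hsub : (range n).filter (fun j => s < f j) ⊆ range j := by
      intro x hx
      rw [mem_filter, mem_range] at hx
      rw [mem_range]
      by_contra hxj
      exact hc (lt_of_lt_of_le hx.2 (hf j x (by omega)))
    have := Finset.card_le_card hsub
    simp at this
    omega

/-- Sum stabilization beyond the support. -/
lemma GR_sum_stab (f : ℕ → ℕ) (n l : ℕ) (h : ∀ j, n ≤ j → f j = 0) (hl : n ≤ l) :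
    ∑ j ∈ range l, f j = ∑ j ∈ range n, f j := by
  symm
  apply Finset.sum_subset (by simp [Finset.range_subset_range, hl])
  intro x hx hnx
  simp only [mem_range] at hx hnx
  exact h x (by omega)

lemma GR_sum_split (f : ℕ → ℕ) (a b : ℕ) (hab : a ≤ b) :
    ∑ j ∈ range b, f j = ∑ j ∈ range a, f j + ∑ j ∈ Ico a b, f j :=
  (Finset.sum_range_add_sum_Ico f hab).symm

lemma GR_seg_const (f : ℕ → ℕ) (a b t : ℕ) (h : ∀ j, a ≤ j → j < b → f j = t) :
    ∑ j ∈ Ico a b, f j = (b - a) * t := by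
  have h1 : ∑ j ∈ Ico a b, f j = ∑ _j ∈ Ico a b, t := by
    apply Finset.sum_congr rfl
    intro x hx
    rw [mem_Ico] at hx
    exact h x hx.1 hx.2
  rw [h1, Finset.sum_const, Nat.card_Ico, smul_eq_mul]


lemma GR_seg_le (f : ℕ → ℕ) (a b t : ℕ) (h : ∀ j, a ≤ j → j < b → f j ≤ t) :
    ∑ j ∈ Ico a b, f j ≤ (b - a) * t := by
  calc ∑ j ∈ Ico a b, f j ≤ ∑ j ∈ Ico a b, t :=
        Finset.sum_le_sum (fun x hx => by rw [mem_Ico] at hx; exact h x hx.1 hx.2)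
    _ = (b - a) * t := by simp [Nat.card_Ico, mul_comm]

lemma GR_card_succ (m : ℕ) (P : Fin (m+1) → Prop) [DecidablePred P] :
    (univ.filter P).card = (if P 0 then 1 else 0) + (univ.filter (fun i : Fin m => P i.succ)).card := by
  rw [Finset.card_filter, Finset.card_filter, Fin.sum_univ_succ]

lemma GR_seg_ge (f : ℕ → ℕ) (a b t : ℕ) (h : ∀ j, a ≤ j → j < b → t ≤ f j) :
    (b - a) * t ≤ ∑ j ∈ Ico a b, f j := by
  calc (b - a) * t = ∑ _j ∈ Ico a b, t := by simp [Nat.card_Ico, mul_comm]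
    _ ≤ ∑ j ∈ Ico a b, f j :=
        Finset.sum_le_sum (fun x hx => by rw [mem_Ico] at hx; exact h x hx.1 hx.2)

lemma GR_perm_filter_card (m : ℕ) (e : Equiv.Perm (Fin m)) (P : Fin m → Prop) [DecidablePred P] :
    (univ.filter fun i => P (e i)).card = (univ.filter P).card := by
  apply Finset.card_bij (fun i _ => e i)
  · intro a ha; simp_all
  · intro a _ b _ hab; exact e.injective hab
  · intro b hb; exact ⟨e.symm b, by simp_all, by simp⟩

/-- The core existence result: hard direction of Gale–Ryser, with nonincreasing rows. -/
lemma GR_core (n : ℕ) : ∀ (m : ℕ) (r : Fin m → ℕ),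
    (∀ a b : Fin m, a ≤ b → r b ≤ r a) → (∀ i, r i ≤ n) →
    ∀ (C : ℕ → ℕ), (∀ a b : ℕ, a ≤ b → C b ≤ C a) → (∀ j, n ≤ j → C j = 0) →
    (∀ l, ∑ j ∈ range l, C j ≤
      ∑ j ∈ range l, (univ.filter (fun i => j + 1 ≤ r i)).card) →
    (∑ j ∈ range n, C j = ∑ j ∈ range n, (univ.filter (fun i => j + 1 ≤ r i)).card) →
    ∃ A : Fin m → Fin n → ℕ, (∀ i j, A i j = 0 ∨ A i j = 1) ∧
      (∀ i, ∑ j, A i j = r i) ∧ (∀ j : Fin n, ∑ i, A i j = C j.1) := by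
  intro m
  induction m with
  | zero =>
    intro r _ _ C _ _ _ hsum
    have hC0 : ∀ j, j < n → C j = 0 := by
      intro j hj
      have h1 : ∑ j ∈ range n, C j = 0 := by
        rw [hsum]
        apply Finset.sum_eq_zero
        intro x _
        simp
      exact Finset.sum_eq_zero_iff.mp h1 j (mem_range.mpr hj)
    refine ⟨fun i => i.elim0, fun i => i.elim0, fun i => i.elim0, fun j => ?_⟩
    simp [hC0 j.1 j.2]
  | succ m ih =>
    intro r hranti hr C hCanti hCzero hmaj hsum
    set D : ℕ → ℕ := fun j => ((univ : Finset (Fin (m+1))).filter (fun i => j + 1 ≤ r i)).card with hDdef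
    set D' : ℕ → ℕ := fun j => ((univ : Finset (Fin m)).filter (fun i => j + 1 ≤ r i.succ)).card with hD'def
    replace hmaj : ∀ l, ∑ j ∈ range l, C j ≤ ∑ j ∈ range l, D j := hmaj
    replace hsum : ∑ j ∈ range n, C j = ∑ j ∈ range n, D j := hsum
    have hDsplit : ∀ j, D j = (if j + 1 ≤ r 0 then 1 else 0) + D' j := by
      intro j
      exact GR_card_succ m (fun i => j + 1 ≤ r i)
    obtain ⟨k, hkdef⟩ : ∃ k, r 0 = k := ⟨_, rfl⟩
    simp only [hkdef] at hDsplit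
    have hkn : k ≤ n := hkdef ▸ hr 0
    have hDanti : ∀ a b : ℕ, a ≤ b → D b ≤ D a := by
      intro a b hab
      apply Finset.card_le_card
      intro i hi
      simp only [mem_filter, mem_univ, true_and] at hi ⊢
      omega
    have hDpos : ∀ j, j < k → 1 ≤ D j := by
      intro j hj
      have : (0 : Fin (m+1)) ∈ (univ : Finset (Fin (m+1))).filter (fun i => j + 1 ≤ r i) := by
        simp only [mem_filter, mem_univ, true_and]
        omega
      have := Finset.card_pos.mpr ⟨0, this⟩
      simpa [hDdef] using this
    have hDzero : ∀ j, k ≤ j → D j = 0 := by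
      intro j hj
      simp only [hDdef, Finset.card_eq_zero, Finset.filter_eq_empty_iff]
      intro i _
      have := hranti 0 i (Fin.zero_le i)
      omega
    have hD'zero : ∀ j, n ≤ j → D' j = 0 := by
      intro j hj
      simp only [hD'def, Finset.card_eq_zero, Finset.filter_eq_empty_iff]
      intro i _
      have := hr i.succ
      omega
    -- case k = 0
    rcases Nat.eq_zero_or_pos k with hk0 | hkpos
    · have hD0 : ∀ j, D j = 0 := fun j => hDzero j (by omega)
      have hC0 : ∀ j, j < n → C j = 0 := by
        intro j hj
        have h1 : ∑ j ∈ range n, C j = 0 := by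
          rw [hsum]
          apply Finset.sum_eq_zero
          intro x _
          exact hD0 x
        exact Finset.sum_eq_zero_iff.mp h1 j (mem_range.mpr hj)
      refine ⟨fun _ _ => 0, fun i j => Or.inl rfl, fun i => ?_, fun j => ?_⟩
      · have : r i ≤ r 0 := hranti 0 i (Fin.zero_le i)
        simp
        omega
      · simp [hC0 j.1 j.2]
    -- main case k ≥ 1
    · obtain ⟨t, htdef⟩ : ∃ t, C (k - 1) = t := ⟨_, rfl⟩
      have hsum_mono : ∀ a b : ℕ, a ≤ b → ∑ j ∈ range a, D j ≤ ∑ j ∈ range b, D j := by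
        intro a b hab
        apply Finset.sum_le_sum_of_subset
        exact Finset.range_subset_range.mpr hab
      have ht : 1 ≤ t := by
        by_contra ht0
        have htz : t = 0 := by omega
        have hCz : ∀ j, k - 1 ≤ j → C j = 0 := by
          intro j hj
          have := hCanti (k-1) j hj
          omega
        have h1 : ∑ j ∈ range n, C j = ∑ j ∈ range (k-1), C j :=
          GR_sum_stab C (k-1) n hCz (by omega)
        have h2 : ∑ j ∈ range (k-1), C j ≤ ∑ j ∈ range (k-1), D j := hmaj (k-1)
        have h3 := Finset.sum_range_succ D (k-1)
        have hkk : k - 1 + 1 = k := by omega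
        rw [hkk] at h3
        have h4 : 1 ≤ D (k-1) := hDpos (k-1) (by omega)
        have h5 : ∑ j ∈ range k, D j ≤ ∑ j ∈ range n, D j := hsum_mono k n hkn
        omega
      obtain ⟨p, hpdef⟩ : ∃ p, ((range n).filter (fun j => t < C j)).card = p := ⟨_, rfl⟩
      have hp : ∀ j, t < C j ↔ j < p := by
        intro j
        rw [← hpdef]
        apply GR_downset C hCanti t n
        intro j' hj'
        by_contra hjn
        have := hCzero j' (by omega)
        omega
      obtain ⟨q, hqdef⟩ : ∃ q, ((range n).filter (fun j => t - 1 < C j)).card = q := ⟨_, rfl⟩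
      have hq : ∀ j, t ≤ C j ↔ j < q := by
        intro j
        have h1 : t - 1 < C j ↔ j < q := by
          rw [← hqdef]
          apply GR_downset C hCanti (t-1) n
          intro j' hj'
          by_contra hjn
          have := hCzero j' (by omega)
          omega
        omega
      have hpk : p < k := by
        have h1 := (hp (k-1)).mpr
        omega
      have hkq : k ≤ q := by
        have h1 := (hq (k-1)).mp
        omega
      have hqn : q ≤ n := by
        rw [← hqdef]
        calc ((range n).filter (fun j => t - 1 < C j)).card ≤ (range n).card :=
              Finset.card_filter_le _ _
          _ = n := Finset.card_range n
      have hCt : ∀ j, p ≤ j → j < q → C j = t := by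
        intro j h1 h2
        have h3 := (hp j).mp
        have h4 := (hq j).mpr h2
        omega
      have hCgt : ∀ j, j < p → t + 1 ≤ C j := fun j hj => (hp j).mpr hj
      have hClt : ∀ j, q ≤ j → C j < t := by
        intro j hj
        have := (hq j).mp
        omega
      obtain ⟨g, hgdef⟩ : ∃ g, q - (k - p) = g := ⟨_, rfl⟩
      have hpg : p ≤ g := by omega
      have hgq : g < q := by omega
      have hgkq : g + (k - p) = q := by omega
      set ind : ℕ → ℕ := fun j => if j < p ∨ (g ≤ j ∧ j < q) then 1 else 0 with hinddef
      set C' : ℕ → ℕ := fun j => C j - ind j with hC'def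
      have hCind : ∀ j, ind j ≤ C j := by
        intro j
        simp only [hinddef]
        split_ifs with h
        · have : C j ≥ t := by
            rcases h with h | h
            · exact le_of_lt (hCgt j h)
            · exact le_of_eq (hCt j (by omega) h.2).symm
          omega
        · omega
      have hdec : ∀ l, ∑ j ∈ range l, ind j = min l p + (min l q - min l g) := by
        intro l
        induction l with
        | zero => simp
        | succ l ihl =>
          rw [Finset.sum_range_succ, ihl]
          simp only [hinddef]
          split_ifs with h <;> omega
      set ind2 : ℕ → ℕ := fun j => if j + 1 ≤ k then 1 else 0 with hind2def
      have hind2 : ∀ l, ∑ j ∈ range l, ind2 j = min l k := by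
        intro l
        induction l with
        | zero => simp
        | succ l ihl =>
          rw [Finset.sum_range_succ, ihl]
          simp only [hind2def]
          split_ifs with h <;> omega
      have hD'D : ∀ j, D' j = D j - ind2 j := by
        intro j
        have := hDsplit j
        simp only [hind2def]
        omega
      have hind2D : ∀ j, ind2 j ≤ D j := by
        intro j
        simp only [hind2def]
        split_ifs with h
        · exact hDpos j (by omega)
        · omega
      have hSC' : ∀ l, ∑ j ∈ range l, C' j = ∑ j ∈ range l, C j - ∑ j ∈ range l, ind j := by
        intro l
        simp only [hC'def]
        exact Finset.sum_tsub_distrib _ (fun i _ => hCind i)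
      have hSD' : ∀ l, ∑ j ∈ range l, D' j = ∑ j ∈ range l, D j - ∑ j ∈ range l, ind2 j := by
        intro l
        have h1 : ∀ j ∈ range l, D' j = D j - ind2 j := fun j _ => hD'D j
        rw [Finset.sum_congr rfl h1]
        exact Finset.sum_tsub_distrib _ (fun i _ => hind2D i)
      have hindC : ∀ l, ∑ j ∈ range l, ind j ≤ ∑ j ∈ range l, C j :=
        fun l => Finset.sum_le_sum (fun i _ => hCind i)
      have hind2D' : ∀ l, ∑ j ∈ range l, ind2 j ≤ ∑ j ∈ range l, D j :=
        fun l => Finset.sum_le_sum (fun i _ => hind2D i)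
      -- C' is antitone
      have hC'anti : ∀ a b : ℕ, a ≤ b → C' b ≤ C' a := by
        have hsucc : ∀ j, C' (j+1) ≤ C' j := by
          intro j
          have h1 : C (j+1) ≤ C j := hCanti j (j+1) (by omega)
          have e2 : p ≤ j → j < q → C j = t := hCt j
          have e2' : p ≤ j+1 → j+1 < q → C (j+1) = t := hCt (j+1)
          have e3 : j < p → t + 1 ≤ C j := hCgt j
          have e3' : j + 1 < p → t + 1 ≤ C (j+1) := hCgt (j+1)
          have e4 : q ≤ j → C j < t := hClt j
          have e4' : q ≤ j+1 → C (j+1) < t := hClt (j+1)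
          simp only [hC'def, hinddef]
          split_ifs <;> omega
        have := antitone_nat_of_succ_le hsucc
        exact fun a b hab => this hab
      have hC'zero : ∀ j, n ≤ j → C' j = 0 := by
        intro j hj
        simp only [hC'def]
        have := hCzero j hj
        omega
      -- majorization for the reduced problem
      have hmaj'le : ∀ l, l ≤ n → ∑ j ∈ range l, C' j ≤ ∑ j ∈ range l, D' j := by
        intro l hln
        rw [hSC' l, hSD' l, hdec l, hind2 l]
        have F3 := hmaj l
        have hiC := hindC l
        have hi2D := hind2D' l
        -- case analysis on the position of l
        rcases le_or_gt l p with hlp | hlp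
        · -- l ≤ p
          have : min l p = l ∧ min l q = l ∧ min l g = l ∧ min l k = l := by omega
          omega
        rcases le_or_gt l q with hlq | hlq
        · -- p < l ≤ q : the interesting zone
          have F1 := hmaj p
          have F2 := hmaj q
          have E1 : ∑ j ∈ range l, C j = ∑ j ∈ range p, C j + (l - p) * t := by
            rw [GR_sum_split C p l (by omega)]
            rw [GR_seg_const C p l t (fun j h1 h2 => hCt j h1 (by omega))]
          have E2 : ∑ j ∈ range q, C j = ∑ j ∈ range l, C j + (q - l) * t := by
            rw [GR_sum_split C l q (by omega)]
            rw [GR_seg_const C l q t (fun j h1 h2 => hCt j (by omega) h2)]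
          rcases le_or_gt (D l) t with hDl | hDl
          · -- D l ≤ t
            have E3 : ∑ j ∈ range q, D j ≤ ∑ j ∈ range l, D j + (k - l) * t := by
              rw [GR_sum_split D l q (by omega)]
              rcases le_or_gt k l with hkl | hkl
              · have : ∑ j ∈ Ico l q, D j = (q - l) * 0 :=
                  GR_seg_const D l q 0 (fun j h1 _ => hDzero j (by omega))
                omega
              · have hsplit2 : ∑ j ∈ Ico l q, D j = ∑ j ∈ Ico l k, D j + ∑ j ∈ Ico k q, D j := by
                  rw [← Finset.sum_Ico_consecutive D (by omega : l ≤ k) (by omega : k ≤ q)]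
                have hz : ∑ j ∈ Ico k q, D j = (q - k) * 0 :=
                  GR_seg_const D k q 0 (fun j h1 _ => hDzero j (by omega))
                have hb : ∑ j ∈ Ico l k, D j ≤ (k - l) * t :=
                  GR_seg_le D l k t (fun j h1 _ => le_trans (hDanti l j h1) hDl)
                omega
            -- key product inequality
            have K : (k - l) * t + (min l k - (min l p + (min l q - min l g))) ≤ (q - l) * t := by
              have hK' : (k - l) + (min l k - (min l p + (min l q - min l g))) ≤ q - l := by omega
              calc (k - l) * t + (min l k - (min l p + (min l q - min l g)))
                  ≤ (k - l) * t + (min l k - (min l p + (min l q - min l g))) * t := by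
                    have := Nat.le_mul_of_pos_right (min l k - (min l p + (min l q - min l g))) ht
                    omega
                _ = ((k - l) + (min l k - (min l p + (min l q - min l g)))) * t := by ring
                _ ≤ (q - l) * t := Nat.mul_le_mul_right t hK'
            omega
          · -- t + 1 ≤ D l
            have hlk : l < k := by
              by_contra hlk
              have := hDzero l (by omega)
              omega
            have E4 : ∑ j ∈ range p, D j + (l - p) * (t + 1) ≤ ∑ j ∈ range l, D j := by
              rw [GR_sum_split D p l (by omega)]
              have := GR_seg_ge D p l (t+1) (fun j _ h2 => le_trans hDl (hDanti j l (by omega)))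
              omega
            have hmul : (l - p) * (t + 1) = (l - p) * t + (l - p) := by ring
            omega
        · -- q < l
          have : min l p = p ∧ min l q = q ∧ min l g = g ∧ min l k = k := by omega
          omega
      have hD'zero' : ∀ j, n ≤ j → D' j = 0 := hD'zero
      have hmaj' : ∀ l, ∑ j ∈ range l, C' j ≤ ∑ j ∈ range l, D' j := by
        intro l
        rcases le_or_gt l n with hln | hln
        · exact hmaj'le l hln
        · rw [GR_sum_stab C' n l hC'zero (by omega), GR_sum_stab D' n l hD'zero (by omega)]
          exact hmaj'le n le_rfl
      have hsum' : ∑ j ∈ range n, C' j = ∑ j ∈ range n, D' j := by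
        rw [hSC' n, hSD' n, hdec n, hind2 n]
        have h1 : min n p = p ∧ min n q = q ∧ min n g = g ∧ min n k = k := by omega
        omega
      -- apply the induction hypothesis
      obtain ⟨A', hA'01, hA'row, hA'col⟩ :=
        ih (fun i => r i.succ)
          (fun a b hab => hranti a.succ b.succ (by simpa using hab))
          (fun i => hr i.succ) C' hC'anti hC'zero hmaj' hsum'
      -- assemble the matrix
      set row0 : Fin n → ℕ := fun j => ind j.1 with hrow0def
      refine ⟨Fin.cons row0 A', ?_, ?_, ?_⟩
      · intro i j
        refine Fin.cases ?_ ?_ i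
        · simp only [Fin.cons_zero, hrow0def, hinddef]
          split_ifs <;> simp
        · intro i'
          simp only [Fin.cons_succ]
          exact hA'01 i' j
      · intro i
        refine Fin.cases ?_ ?_ i
        · simp only [Fin.cons_zero]
          have h1 : ∑ j : Fin n, row0 j = ∑ j ∈ range n, ind j :=
            GR_sum_conv_univ n row0 ind (fun j => rfl)
          rw [h1, hdec n]
          omega
        · intro i'
          simp only [Fin.cons_succ]
          exact hA'row i'
      · intro j
        rw [Fin.sum_univ_succ]
        simp only [Fin.cons_zero, Fin.cons_succ]
        rw [hA'col j]
        simp only [hrow0def, hC'def]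
        have := hCind j.1
        omega

/-- **Gale–Ryser theorem.** A (0,1)-matrix with row sum tuple `r` and nonincreasing
column sum tuple `c` exists iff `c` is majorized by the conjugate tuple `d` of `r`. -/
theorem gale_ryser (m n : ℕ) (hm : 0 < m) (hn : 0 < n)
    (r : Fin m → ℕ) (hr : ∀ i, r i ≤ n)
    (d : Fin n → ℕ)
    (hd : ∀ j : Fin n, d j = (univ.filter (fun i : Fin m => j.1 + 1 ≤ r i)).card)
    (c : Fin n → ℕ) (hc : Antitone c) :
    (∃ A : Fin m → Fin n → ℕ, (∀ i j, A i j = 0 ∨ A i j = 1) ∧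
        (∀ i, ∑ j, A i j = r i) ∧ (∀ j, ∑ i, A i j = c j)) ↔
      ((∀ k : ℕ, 1 ≤ k → k ≤ n →
          ∑ j ∈ univ.filter (fun j : Fin n => j.1 < k), c j ≤
            ∑ j ∈ univ.filter (fun j : Fin n => j.1 < k), d j) ∧
        ∑ j, c j = ∑ j, d j) := by
  have hdexp : ∀ k0 : ℕ, k0 ≤ n →
      ∑ j ∈ univ.filter (fun j : Fin n => j.1 < k0), d j = ∑ i, min (r i) k0 := by
    intro k0 hk0
    have h1 : ∀ j ∈ univ.filter (fun j : Fin n => j.1 < k0),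
        d j = ∑ i, if j.1 + 1 ≤ r i then 1 else 0 := by
      intro j _
      rw [hd j, Finset.card_filter]
    rw [Finset.sum_congr rfl h1, Finset.sum_comm]
    apply Finset.sum_congr rfl
    intro i _
    rw [← Finset.card_filter, Finset.filter_filter]
    have h2 : (univ.filter (fun j : Fin n => j.1 < k0 ∧ j.1 + 1 ≤ r i))
        = univ.filter (fun j : Fin n => j.1 < min (r i) k0) := by
      apply Finset.filter_congr
      intro j _
      omega
    rw [h2, GR_fincard]
    have := hr i
    omega
  constructor
  · rintro ⟨A, hA01, hArow, hAcol⟩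
    have hcA : ∀ (s : Finset (Fin n)), ∑ j ∈ s, c j = ∑ i, ∑ j ∈ s, A i j := by
      intro s
      rw [← Finset.sum_comm]
      apply Finset.sum_congr rfl
      intro j _
      exact (hAcol j).symm
    have hrowle : ∀ (i : Fin m) (k0 : ℕ), k0 ≤ n →
        ∑ j ∈ univ.filter (fun j : Fin n => j.1 < k0), A i j ≤ min (r i) k0 := by
      intro i k0 hk0
      apply le_min
      · rw [← hArow i]
        apply Finset.sum_le_sum_of_subset (Finset.filter_subset _ _)
      · calc ∑ j ∈ univ.filter (fun j : Fin n => j.1 < k0), A i j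
            ≤ ∑ _j ∈ univ.filter (fun j : Fin n => j.1 < k0), 1 := by
              apply Finset.sum_le_sum
              intro j _
              rcases hA01 i j with h | h <;> omega
          _ = (univ.filter (fun j : Fin n => j.1 < k0)).card := by simp
          _ = min k0 n := GR_fincard n k0
          _ ≤ k0 := min_le_left _ _
    constructor
    · intro k0 _ hk0n
      rw [hcA, hdexp k0 hk0n]
      exact Finset.sum_le_sum (fun i _ => hrowle i k0 hk0n)
    · have huniv : univ.filter (fun j : Fin n => j.1 < n) = (univ : Finset (Fin n)) := by
        apply Finset.filter_true_of_mem
        intro j _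
        exact j.2
      have h1 := hdexp n le_rfl
      rw [huniv] at h1
      have h2 := hcA (univ : Finset (Fin n))
      rw [h1, h2]
      apply Finset.sum_congr rfl
      intro i _
      rw [hArow i]
      have := hr i
      omega
  · rintro ⟨hpart, htot⟩
    set e : Equiv.Perm (Fin m) := Fin.revPerm.trans (Tuple.sort r) with hedef
    have hsorted : ∀ a b : Fin m, a ≤ b → r (e b) ≤ r (e a) := by
      intro a b hab
      have h1 : b.rev ≤ a.rev := Fin.rev_le_rev.mpr hab
      have h2 := Tuple.monotone_sort r h1
      simpa [hedef] using h2
    have hDe : ∀ j : ℕ, ((univ : Finset (Fin m)).filter (fun i => j + 1 ≤ r (e i))).card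
        = (univ.filter (fun i => j + 1 ≤ r i)).card :=
      fun j => GR_perm_filter_card m e (fun i => j + 1 ≤ r i)
    set C : ℕ → ℕ := fun j => if h : j < n then c ⟨j, h⟩ else 0 with hCdef
    have hCF : ∀ j : Fin n, C j.1 = c j := fun j => dif_pos j.2
    have hCzero : ∀ j, n ≤ j → C j = 0 := by
      intro j hj
      simp only [hCdef]
      rw [dif_neg (by omega)]
    have hCanti : ∀ a b : ℕ, a ≤ b → C b ≤ C a := by
      intro a b hab
      by_cases hb : b < n
      · have ha : a < n := by omega
        simp only [hCdef]
        rw [dif_pos hb, dif_pos ha]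
        exact hc (show (⟨a, ha⟩ : Fin n) ≤ ⟨b, hb⟩ from hab)
      · rw [hCzero b (by omega)]
        omega
    set DD : ℕ → ℕ := fun j => ((univ : Finset (Fin m)).filter (fun i => j + 1 ≤ r i)).card
      with hDDdef
    have hDF : ∀ j : Fin n, DD j.1 = d j := fun j => (hd j).symm
    have hDDzero : ∀ j, n ≤ j → DD j = 0 := by
      intro j hj
      simp only [hDDdef, Finset.card_eq_zero, Finset.filter_eq_empty_iff]
      intro i _
      have := hr i
      omega
    have hsumN : ∑ j ∈ range n, C j = ∑ j ∈ range n, DD j := by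
      rw [← GR_sum_conv_univ n c C hCF, ← GR_sum_conv_univ n d DD hDF]
      exact htot
    have hmajN : ∀ l, ∑ j ∈ range l, C j ≤ ∑ j ∈ range l, DD j := by
      intro l
      rcases Nat.eq_zero_or_pos l with hl0 | hlpos
      · simp [hl0]
      rcases le_or_gt l n with hln | hln
      · rw [← GR_sum_conv n l hln c C hCF, ← GR_sum_conv n l hln d DD hDF]
        exact hpart l hlpos hln
      · rw [GR_sum_stab C n l hCzero (by omega), GR_sum_stab DD n l hDDzero (by omega)]
        exact le_of_eq hsumN
    have hDe' : ∀ l, ∑ j ∈ range l, ((univ : Finset (Fin m)).filter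
        (fun i => j + 1 ≤ r (e i))).card = ∑ j ∈ range l, DD j := by
      intro l
      apply Finset.sum_congr rfl
      intro j _
      exact hDe j
    obtain ⟨A', h01, hrow, hcol⟩ :=
      GR_core n m (fun i => r (e i)) hsorted (fun i => hr (e i)) C hCanti hCzero
        (fun l => le_trans (hmajN l) (le_of_eq (hDe' l).symm))
        (by rw [hDe' n]; exact hsumN)
    refine ⟨fun i j => A' (e.symm i) j, fun i j => h01 _ j, fun i => ?_, fun j => ?_⟩
    · have h1 := hrow (e.symm i)
      simpa using h1
    · have h1 : ∑ i, A' (e.symm i) j = ∑ i, A' i j := Equiv.sum_comp e.symm (fun i => A' i j)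
      rw [h1, hcol j, hCF j]
end

section
/- Let m, n be positive integers and let r = (r_1, …, r_m) be integers with 0 ≤ r_i ≤ n, with conjugate tuple d = (d_1, …, d_n) defined by d_j = |{i ∈ [m] : r_i ≥ j}|. If c = (c_1, …, c_n) is a nonincreasing tuple of nonnegative integers majorized by d, then there exists a matrix A ∈ {0,1}^{m×n} with row sums r_i(A) = r_i for all i ∈ [m] and column sums c_j(A) = c_j for all j ∈ [n]. -/
open Finset

lemma exists_top_set {m : ℕ} (f : Fin m → ℕ) :
    ∀ t : ℕ, t ≤ m → ∃ S : Finset (Fin m), S.card = t ∧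
      ∀ i ∈ S, ∀ j ∉ S, f j ≤ f i := by
  intro t
  induction t with
  | zero => intro _; exact ⟨∅, rfl, by simp⟩
  | succ t ih =>
    intro ht
    obtain ⟨S, hScard, hStop⟩ := ih (by omega)
    have hne : Sᶜ.Nonempty := by
      rw [← Finset.card_pos, Finset.card_compl, Fintype.card_fin, hScard]; omega
    obtain ⟨i', hi'mem, hi'max⟩ := Finset.exists_max_image Sᶜ f hne
    have hi'S : i' ∉ S := by simpa using hi'mem
    refine ⟨insert i' S, by rw [Finset.card_insert_of_notMem hi'S, hScard], ?_⟩
    intro i hi j hj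
    have hjS : j ∉ S := fun h => hj (Finset.mem_insert_of_mem h)
    rcases Finset.mem_insert.1 hi with h | h
    · subst h; exact hi'max j (by simpa using hjS)
    · exact hStop i h j hjS

lemma sum_indicator_card {m : ℕ} (S : Finset (Fin m)) :
    ∑ i : Fin m, (if i ∈ S then 1 else 0) = S.card := by
  rw [Finset.sum_ite_mem, Finset.univ_inter, Finset.card_eq_sum_ones]

lemma card_filter_fin_lt (n M : ℕ) (hM : M ≤ n) :
    (univ.filter (fun j : Fin n => j.1 < M)).card = M := by
  rw [Finset.card_filter]
  rw [Fin.sum_univ_eq_sum_range (fun j => if j < M then 1 else 0)]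
  rw [← Finset.card_filter]
  have : (Finset.range n).filter (· < M) = Finset.range M := by
    ext x; simp only [Finset.mem_filter, Finset.mem_range]; omega
  rw [this, Finset.card_range]

lemma sum_d_filter_eq (m n : ℕ) (r : Fin m → ℕ) (hr : ∀ i, r i ≤ n)
    (d : Fin n → ℕ)
    (hd : ∀ j : Fin n, d j = (univ.filter (fun i : Fin m => j.1 + 1 ≤ r i)).card)
    (k : ℕ) :
    ∑ j ∈ univ.filter (fun j : Fin n => j.1 < k), d j = ∑ i, min (r i) k := by
  rw [Finset.sum_filter]
  have h1 : ∀ j : Fin n, (if j.1 < k then d j else 0) =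
      ∑ i : Fin m, (if j.1 < k ∧ j.1 + 1 ≤ r i then 1 else 0) := by
    intro j
    rw [hd j, Finset.card_filter]
    split_ifs with h
    · exact Finset.sum_congr rfl (fun i _ => by simp [h])
    · simp [h]
  rw [Finset.sum_congr rfl (fun j _ => h1 j), Finset.sum_comm]
  refine Finset.sum_congr rfl (fun i _ => ?_)
  rw [← Finset.card_filter]
  have h2 : (univ.filter (fun j : Fin n => j.1 < k ∧ j.1 + 1 ≤ r i)) =
      (univ.filter (fun j : Fin n => j.1 < min (r i) k)) := by
    ext j; simp only [Finset.mem_filter, Finset.mem_univ, true_and, Nat.lt_min]; omega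
  rw [h2, card_filter_fin_lt n _ (by have := hr i; omega)]

/-- Core induction: Gale–Ryser construction with `ℕ`-indexed columns. -/
lemma gale_ryser_aux (m : ℕ) : ∀ (n : ℕ) (r : Fin m → ℕ), (∀ i, r i ≤ n) →
    ∀ (c : ℕ → ℕ), (∀ a b : ℕ, a ≤ b → b < n → c b ≤ c a) →
    (∀ k, k ≤ n → ∑ j ∈ Finset.range k, c j ≤ ∑ i, min (r i) k) →
    (∑ j ∈ Finset.range n, c j = ∑ i, r i) →
    ∃ A : Fin m → ℕ → ℕ, (∀ i j, A i j = 0 ∨ A i j = 1) ∧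
      (∀ i, ∑ j ∈ Finset.range n, A i j = r i) ∧
      (∀ j, j < n → ∑ i, A i j = c j) := by
  intro n
  induction n with
  | zero =>
    intro r hr c _ _ _
    exact ⟨fun _ _ => 0, fun _ _ => Or.inl rfl,
      fun i => by simpa using (Nat.le_zero.mp (hr i)).symm, fun j hj => by omega⟩
  | succ n ih =>
    intro r hr c hc hmaj hsum
    -- the last column value is at most m
    have hminm : ∀ k : ℕ, (∑ i, min (r i) 1 : ℕ) ≤ m := by
      intro _
      calc (∑ i, min (r i) 1 : ℕ) ≤ ∑ _i : Fin m, 1 :=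
            Finset.sum_le_sum (fun i _ => Nat.min_le_right _ _)
        _ = m := by simp
    have hc0 : c 0 ≤ ∑ i, min (r i) 1 := by
      have := hmaj 1 (by omega); simpa using this
    have hcnm : c n ≤ m := by
      have h1 : c n ≤ c 0 := hc 0 n (Nat.zero_le _) (by omega)
      exact h1.trans (hc0.trans (hminm 0))
    obtain ⟨S, hScard, hStop⟩ := exists_top_set r (c n) hcnm
    -- every member of S has positive row sum
    have hSpos : ∀ i ∈ S, 1 ≤ r i := by
      by_contra h
      push_neg at h
      obtain ⟨i₀, hi₀S, hi₀⟩ := h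
      have hsub : Finset.univ.filter (fun i => 1 ≤ r i) ⊆ S.erase i₀ := by
        intro i hi
        simp only [Finset.mem_filter, Finset.mem_univ, true_and] at hi
        refine Finset.mem_erase.2 ⟨?_, ?_⟩
        · rintro rfl; omega
        · by_contra hiS
          have := hStop _ hi₀S i hiS; omega
      have h2 : (Finset.univ.filter (fun i => 1 ≤ r i)).card ≤ c n - 1 := by
        have := Finset.card_le_card hsub
        rwa [Finset.card_erase_of_mem hi₀S, hScard] at this
      have h3 : (∑ i, min (r i) 1 : ℕ) = (Finset.univ.filter (fun i => 1 ≤ r i)).card := by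
        rw [Finset.card_filter]
        exact Finset.sum_congr rfl (fun i _ => by split_ifs with h <;> omega)
      have h4 : c n ≤ c 0 := hc 0 n (Nat.zero_le _) (by omega)
      have h5 : 1 ≤ c n := hScard ▸ Finset.card_pos.2 ⟨i₀, hi₀S⟩
      omega
    -- rows with r i = n+1 are all in S
    have hcount : (Finset.univ.filter (fun i => n + 1 ≤ r i)).card ≤ c n := by
      have h1 : (∑ i, r i) = (∑ i, min (r i) n) +
          (Finset.univ.filter (fun i => n + 1 ≤ r i)).card := by
        rw [Finset.card_filter, ← Finset.sum_add_distrib]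
        exact Finset.sum_congr rfl (fun i _ => by
          have := hr i; split_ifs with h <;> omega)
      have h2 := hmaj n (by omega)
      rw [Finset.sum_range_succ] at hsum
      omega
    have hSout : ∀ i, i ∉ S → r i ≤ n := by
      intro i₀ hi₀
      by_contra h
      push_neg at h
      have hsub : insert i₀ S ⊆ Finset.univ.filter (fun i => n + 1 ≤ r i) := by
        intro i hi
        simp only [Finset.mem_filter, Finset.mem_univ, true_and]
        rcases Finset.mem_insert.1 hi with rfl | hiS
        · omega
        · have := hStop i hiS i₀ hi₀; omega
      have := Finset.card_le_card hsub
      rw [Finset.card_insert_of_notMem hi₀, hScard] at this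
      omega
    set r' : Fin m → ℕ := fun i => if i ∈ S then r i - 1 else r i with hr'def
    have hrsplit : ∀ i, r i = r' i + (if i ∈ S then 1 else 0) := by
      intro i; simp only [hr'def]
      split_ifs with h
      · have := hSpos i h; omega
      · omega
    have hsumr' : ∑ i, r i = (∑ i, r' i) + c n := by
      rw [← hScard, ← sum_indicator_card S, ← Finset.sum_add_distrib]
      exact Finset.sum_congr rfl (fun i _ => hrsplit i)
    have hr' : ∀ i, r' i ≤ n := by
      intro i; simp only [hr'def]
      split_ifs with h
      · have := hr i; omega
      · exact hSout i h
    -- prefix majorization for r'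
    have hmaj' : ∀ k, k ≤ n → ∑ j ∈ Finset.range k, c j ≤ ∑ i, min (r' i) k := by
      intro k hk
      rcases Nat.eq_zero_or_pos k with rfl | hkpos
      · simp
      set t := (S.filter (fun i => r i ≤ k)).card with htdef
      have hsplit : ∑ i, min (r i) k = (∑ i, min (r' i) k) + t := by
        have hpt : ∀ i : Fin m, min (r i) k = min (r' i) k +
            (if i ∈ S then (if r i ≤ k then 1 else 0) else 0) := by
          intro i
          simp only [hr'def]
          by_cases hiS : i ∈ S
          · have := hSpos i hiS
            simp only [hiS, if_true]
            split_ifs with h <;> omega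
          · simp [hiS]
        calc ∑ i, min (r i) k
            = ∑ i : Fin m, (min (r' i) k +
              (if i ∈ S then (if r i ≤ k then 1 else 0) else 0)) :=
              Finset.sum_congr rfl (fun i _ => hpt i)
          _ = (∑ i, min (r' i) k) +
              ∑ i : Fin m, (if i ∈ S then (if r i ≤ k then 1 else 0) else 0) :=
              Finset.sum_add_distrib
          _ = (∑ i, min (r' i) k) + t := by
              rw [Finset.sum_ite_mem, Finset.univ_inter, htdef, Finset.card_filter]
      suffices h : ∑ j ∈ Finset.range k, c j + t ≤ ∑ i, min (r i) k by omega
      rcases Nat.eq_zero_or_pos t with ht0 | htpos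
      · rw [ht0]
        have := hmaj k (by omega); omega
      · -- some i₀ ∈ S has r i₀ ≤ k, hence all rows outside S have r ≤ k
        have hex : ∃ i₀ ∈ S, r i₀ ≤ k := by
          obtain ⟨i₀, hi₀⟩ := Finset.card_pos.1 htpos
          simp only [Finset.mem_filter] at hi₀
          exact ⟨i₀, hi₀.1, hi₀.2⟩
        obtain ⟨i₀, hi₀S, hi₀k⟩ := hex
        have hout : ∀ i, i ∉ S → r i ≤ k := fun i hi => (hStop i₀ hi₀S i hi).trans hi₀k
        have hsub : Finset.univ.filter (fun i => k + 1 ≤ r i) ⊆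
            S.filter (fun i => ¬ r i ≤ k) := by
          intro i hi
          simp only [Finset.mem_filter, Finset.mem_univ, true_and] at hi ⊢
          constructor
          · by_contra h; have := hout i h; omega
          · omega
        have hcard2 : (Finset.univ.filter (fun i => k + 1 ≤ r i)).card + t ≤ c n := by
          have h1 := Finset.card_le_card hsub
          have h2 := Finset.card_filter_add_card_filter_not
            (s := S) (p := fun i => r i ≤ k)
          rw [hScard] at h2
          omega
        have hstep : ∑ i, min (r i) (k + 1) = (∑ i, min (r i) k) +
            (Finset.univ.filter (fun i => k + 1 ≤ r i)).card := by
          rw [Finset.card_filter, ← Finset.sum_add_distrib]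
          exact Finset.sum_congr rfl (fun i _ => by split_ifs with h <;> omega)
        have h3 := hmaj (k + 1) (by omega)
        rw [Finset.sum_range_succ, hstep] at h3
        have h4 : c n ≤ c k := hc k n hk (by omega)
        have h5 : t ≤ c n := by
          rw [htdef, ← hScard]
          exact Finset.card_le_card (Finset.filter_subset _ _)
        omega
    have hsum' : ∑ j ∈ Finset.range n, c j = ∑ i, r' i := by
      rw [Finset.sum_range_succ] at hsum; omega
    obtain ⟨A', hA'01, hA'row, hA'col⟩ := ih r' hr'
      c (fun a b hab hb => hc a b hab (by omega)) hmaj' hsum'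
    refine ⟨fun i j => if j = n then (if i ∈ S then 1 else 0) else A' i j, ?_, ?_, ?_⟩
    · intro i j
      dsimp only
      split_ifs with h h2
      · exact Or.inr rfl
      · exact Or.inl rfl
      · exact hA'01 i j
    · intro i
      dsimp only
      rw [Finset.sum_range_succ]
      have h1 : ∑ j ∈ Finset.range n, (if j = n then (if i ∈ S then 1 else 0)
          else A' i j) = ∑ j ∈ Finset.range n, A' i j := by
        refine Finset.sum_congr rfl (fun j hj => ?_)
        rw [Finset.mem_range] at hj
        rw [if_neg (by omega)]
      rw [h1, hA'row i, if_pos rfl]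
      exact (hrsplit i).symm
    · intro j hj
      dsimp only
      by_cases hjn : j = n
      · subst hjn
        have h1 : ∀ i : Fin m, (if j = j then (if i ∈ S then 1 else 0) else A' i j)
            = if i ∈ S then 1 else 0 := fun i => if_pos rfl
        rw [Finset.sum_congr rfl (fun i _ => h1 i), sum_indicator_card, hScard]
      · have h1 : ∀ i : Fin m, (if j = n then (if i ∈ S then 1 else 0) else A' i j)
            = A' i j := fun i => if_neg hjn
        rw [Finset.sum_congr rfl (fun i _ => h1 i)]
        exact hA'col j (by omega)

/-- If a nonincreasing tuple `c` of nonnegative integers is majorized by the conjugate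
tuple `d` of `r`, then there is a (0,1)-matrix with row sums `r` and column sums `c`. -/
theorem exists_matrix_of_majorized (m n : ℕ) (hm : 0 < m) (hn : 0 < n)
    (r : Fin m → ℕ) (hr : ∀ i, r i ≤ n)
    (d : Fin n → ℕ)
    (hd : ∀ j : Fin n, d j = (univ.filter (fun i : Fin m => j.1 + 1 ≤ r i)).card)
    (c : Fin n → ℕ) (hc : Antitone c)
    (hmaj : ∀ k : ℕ, 1 ≤ k → k ≤ n →
        ∑ j ∈ univ.filter (fun j : Fin n => j.1 < k), c j ≤
          ∑ j ∈ univ.filter (fun j : Fin n => j.1 < k), d j)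
    (hsum : ∑ j, c j = ∑ j, d j) :
    ∃ A : Fin m → Fin n → ℕ, (∀ i j, A i j = 0 ∨ A i j = 1) ∧
      (∀ i, ∑ j, A i j = r i) ∧ (∀ j, ∑ i, A i j = c j) := by
  classical
  set cc : ℕ → ℕ := fun j => if h : j < n then c ⟨j, h⟩ else 0 with hccdef
  have hcc_eq : ∀ j : Fin n, cc j.1 = c j := by
    intro j
    simp only [hccdef, dif_pos j.isLt, Fin.eta]
  have hccmono : ∀ a b : ℕ, a ≤ b → b < n → cc b ≤ cc a := by
    intro a b hab hb
    have ha : a < n := lt_of_le_of_lt hab hb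
    simp only [hccdef, dif_pos hb, dif_pos ha]
    exact hc (show (⟨a, ha⟩ : Fin n) ≤ ⟨b, hb⟩ from hab)
  have hcsum : ∀ k, k ≤ n → ∑ j ∈ Finset.range k, cc j =
      ∑ j ∈ univ.filter (fun j : Fin n => j.1 < k), c j := by
    intro k hk
    rw [Finset.sum_filter]
    have h1 : ∀ j : Fin n, (if j.1 < k then c j else 0) =
        (fun x : ℕ => if x < k then cc x else 0) j.1 := by
      intro j
      simp only [hcc_eq]
    rw [Finset.sum_congr rfl (fun j _ => h1 j),
      Fin.sum_univ_eq_sum_range (fun x => if x < k then cc x else 0), ← Finset.sum_filter]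
    congr 1
    ext x; simp only [Finset.mem_filter, Finset.mem_range]; omega
  have hfull : univ.filter (fun j : Fin n => j.1 < n) = univ := by
    ext j; simp [j.isLt]
  have hmaj' : ∀ k, k ≤ n → ∑ j ∈ Finset.range k, cc j ≤ ∑ i, min (r i) k := by
    intro k hk
    rcases Nat.eq_zero_or_pos k with rfl | hkpos
    · simp
    rw [hcsum k hk, ← sum_d_filter_eq m n r hr d hd k]
    exact hmaj k hkpos hk
  have hsum' : ∑ j ∈ Finset.range n, cc j = ∑ i, r i := by
    rw [hcsum n le_rfl, hfull, hsum]
    have h1 := sum_d_filter_eq m n r hr d hd n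
    rw [hfull] at h1
    rw [h1]
    exact Finset.sum_congr rfl (fun i _ => min_eq_left (hr i))
  obtain ⟨A', hA'01, hA'row, hA'col⟩ := gale_ryser_aux m n r hr cc hccmono hmaj' hsum'
  refine ⟨fun i j => A' i j.1, fun i j => hA'01 i j.1, ?_, ?_⟩
  · intro i
    rw [Fin.sum_univ_eq_sum_range (fun j => A' i j)]
    exact hA'row i
  · intro j
    rw [← hcc_eq j]
    exact hA'col j.1 j.isLt
end

section
/- Let m, n be positive integers, let r = (r_1, …, r_m) be integers with 0 ≤ r_i ≤ n for all i, let d = (d_1, …, d_n) be the conjugate tuple of r, and let f : {0,1,…,m} → ℤ be any function. Then the minimum of ∑_{j=1}^n f(c_j(A)) over all matrices A ∈ {0,1}^{m×n} with row sums r_i(A) = r_i for all i equals the minimum of ∑_{j=1}^n f(c_j) over all nonincreasing tuples c = (c_1, …, c_n) of nonnegative integers that are majorized by d; in particular, both feasible sets are nonempty and both minima are attained. -/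
open Finset

namespace CSO

variable {n : ℕ}

/-- prefix sum of first `k` entries -/
def P (c : Fin n → ℕ) (k : ℕ) : ℕ := ∑ j ∈ univ.filter (fun j : Fin n => j.1 < k), c j

lemma P_zero (c : Fin n → ℕ) : P c 0 = 0 := by simp [P]

lemma P_succ (c : Fin n → ℕ) {k : ℕ} (hk : k < n) :
    P c (k + 1) = P c k + c ⟨k, hk⟩ := by
  unfold P
  have h : univ.filter (fun j : Fin n => j.1 < k + 1)
      = insert ⟨k, hk⟩ (univ.filter (fun j : Fin n => j.1 < k)) := by
    ext j
    simp only [mem_filter, mem_univ, true_and, mem_insert, Fin.ext_iff]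
    omega
  rw [h, Finset.sum_insert (by simp)]
  ring

lemma P_of_ge (c : Fin n → ℕ) {k : ℕ} (hk : n ≤ k) : P c k = ∑ j, c j := by
  unfold P
  congr 1
  ext j
  simp only [mem_filter, mem_univ, true_and, iff_true]
  omega

lemma P_mono (c : Fin n → ℕ) {k k' : ℕ} (h : k ≤ k') : P c k ≤ P c k' := by
  apply Finset.sum_le_sum_of_subset
  intro j; simp only [mem_filter, mem_univ, true_and]; omega

lemma card_filter_lt {k : ℕ} (hk : k ≤ n) :
    ((univ : Finset (Fin n)).filter (fun j => j.1 < k)).card = k := by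
  rw [← Finset.card_range k]
  apply Finset.card_bij (fun j _ => j.1)
  · intro a ha; simp only [mem_filter, mem_univ, true_and] at ha; simpa using ha
  · intro a _ b _ h; exact Fin.ext h
  · intro b hb
    simp only [Finset.mem_range] at hb
    exact ⟨⟨b, lt_of_lt_of_le hb hk⟩, by simp [hb], rfl⟩


lemma staircase (m : ℕ) (r : Fin m → ℕ) (hr : ∀ i, r i ≤ n) :
    ∃ A : Fin m → Fin n → ℕ, (∀ i j, A i j = 0 ∨ A i j = 1) ∧ (∀ i, ∑ j, A i j = r i) ∧
      (∀ j : Fin n, ∑ i, A i j = (univ.filter (fun i : Fin m => j.1 + 1 ≤ r i)).card) := by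
  refine ⟨fun i j => if j.1 < r i then 1 else 0, ?_, ?_, ?_⟩
  · intro i j; dsimp only; split <;> simp
  · intro i
    have := Finset.sum_boole (R := ℕ) (fun j : Fin n => j.1 < r i) univ
    simp only [Nat.cast_id] at this
    dsimp only
    rw [this]
    exact card_filter_lt (hr i)

  · intro j
    have := Finset.sum_boole (R := ℕ) (fun i : Fin m => j.1 < r i) univ
    simp only [Nat.cast_id] at this
    dsimp only
    rw [this]
    rfl

lemma swap_matrix {m : ℕ} (A : Fin m → Fin n → ℕ)
    (h01 : ∀ i j, A i j = 0 ∨ A i j = 1) (j k : Fin n) (hjk : j ≠ k)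
    (hgt : ∑ i, A i k < ∑ i, A i j) :
    ∃ B : Fin m → Fin n → ℕ, (∀ i l, B i l = 0 ∨ B i l = 1) ∧
      (∀ i, ∑ l, B i l = ∑ l, A i l) ∧
      (∑ i, B i j) + 1 = ∑ i, A i j ∧ (∑ i, B i k) = (∑ i, A i k) + 1 ∧
      (∀ l, l ≠ j → l ≠ k → ∑ i, B i l = ∑ i, A i l) := by
  have hex : ∃ i0, A i0 j = 1 ∧ A i0 k = 0 := by
    by_contra hc
    push_neg at hc
    have hle : ∀ i, A i j ≤ A i k := by
      intro i
      rcases h01 i j with h | h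
      · simp [h]
      · rcases h01 i k with h' | h'
        · exact absurd h' (hc i h)
        · simp [h, h']
    exact absurd (Finset.sum_le_sum (fun i _ => hle i)) (not_le.mpr hgt)
  obtain ⟨i0, hij, hik⟩ := hex
  set B : Fin m → Fin n → ℕ :=
    fun i => if i = i0 then Function.update (Function.update (A i0) j 0) k 1 else A i with hB
  have hBne : ∀ i, i ≠ i0 → B i = A i := fun i hi => if_neg hi
  have hB0 : B i0 = Function.update (Function.update (A i0) j 0) k 1 := if_pos rfl
  have hB0j : B i0 j = 0 := by
    rw [hB0, Function.update_of_ne hjk, Function.update_self]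
  have hB0k : B i0 k = 1 := by rw [hB0, Function.update_self]
  have hB0l : ∀ l, l ≠ j → l ≠ k → B i0 l = A i0 l := by
    intro l hlj hlk
    rw [hB0, Function.update_of_ne hlk, Function.update_of_ne hlj]
  have hBent : ∀ i l, B i l = A i l ∨ (i = i0 ∧ l = j) ∨ (i = i0 ∧ l = k) := by
    intro i l
    rcases eq_or_ne i i0 with rfl | hi
    · rcases eq_or_ne l j with rfl | hlj
      · right; left; exact ⟨rfl, rfl⟩
      · rcases eq_or_ne l k with rfl | hlk
        · right; right; exact ⟨rfl, rfl⟩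
        · left; rw [hB0l l hlj hlk]
    · left; rw [hBne i hi]
  refine ⟨B, ?_, ?_, ?_, ?_, ?_⟩
  · intro i l
    rcases hBent i l with h | ⟨rfl, rfl⟩ | ⟨rfl, rfl⟩
    · rw [h]; exact h01 i l
    · left; exact hB0j
    · right; exact hB0k
  · intro i
    rcases eq_or_ne i i0 with rfl | hi
    · have e1 : ∑ l, B i l = 1 + ∑ l ∈ (univ : Finset (Fin n)) \ {k}, Function.update (A i) j 0 l := by
        rw [hB0]
        exact Finset.sum_update_of_mem (Finset.mem_univ k) (Function.update (A i) j 0) 1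
      have hjmem : j ∈ (univ : Finset (Fin n)) \ {k} := by simp [hjk]
      have e2 : ∑ l ∈ (univ : Finset (Fin n)) \ {k}, Function.update (A i) j 0 l
          = 0 + ∑ l ∈ ((univ : Finset (Fin n)) \ {k}) \ {j}, A i l :=
        Finset.sum_update_of_mem hjmem (A i) 0
      have e3 : ∑ l, A i l = ∑ l ∈ (univ : Finset (Fin n)) \ {k}, A i l + A i k :=
        Finset.sum_eq_sum_sdiff_singleton_add (Finset.mem_univ k) (A i)
      have e4 : ∑ l ∈ (univ : Finset (Fin n)) \ {k}, A i l
          = ∑ l ∈ ((univ : Finset (Fin n)) \ {k}) \ {j}, A i l + A i j :=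
        Finset.sum_eq_sum_sdiff_singleton_add hjmem (A i)
      rw [e1, e2, e3, e4, hij, hik]
      ring
    · rw [hBne i hi]
  · rw [Finset.sum_eq_sum_sdiff_singleton_add (Finset.mem_univ i0) (fun i => B i j),
      Finset.sum_eq_sum_sdiff_singleton_add (Finset.mem_univ i0) (fun i => A i j)]
    have : ∑ i ∈ (univ : Finset (Fin m)) \ {i0}, B i j
        = ∑ i ∈ (univ : Finset (Fin m)) \ {i0}, A i j := by
      apply Finset.sum_congr rfl
      intro i hi
      rw [hBne i (by simpa using (Finset.mem_sdiff.mp hi).2)]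
    rw [this, hB0j, hij]
  · rw [Finset.sum_eq_sum_sdiff_singleton_add (Finset.mem_univ i0) (fun i => B i k),
      Finset.sum_eq_sum_sdiff_singleton_add (Finset.mem_univ i0) (fun i => A i k)]
    have : ∑ i ∈ (univ : Finset (Fin m)) \ {i0}, B i k
        = ∑ i ∈ (univ : Finset (Fin m)) \ {i0}, A i k := by
      apply Finset.sum_congr rfl
      intro i hi
      rw [hBne i (by simpa using (Finset.mem_sdiff.mp hi).2)]
    rw [this, hB0k, hik]
  · intro l hlj hlk
    apply Finset.sum_congr rfl
    intro i _
    rcases eq_or_ne i i0 with rfl | hi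
    · exact hB0l l hlj hlk
    · rw [hBne i hi]


lemma P_succ' (c : Fin n → ℕ) (j : Fin n) : P c (j.1 + 1) = P c j.1 + c j := by
  rw [P_succ c j.isLt]

lemma sum_ite_lt {a : ℕ} (ha : a ≤ n) :
    (∑ j : Fin n, if j.1 < a then (1 : ℕ) else 0) = a := by
  have := Finset.sum_boole (R := ℕ) (fun j : Fin n => j.1 < a) univ
  simp only [Nat.cast_id] at this
  rw [this]
  exact card_filter_lt ha

lemma move {d c : Fin n → ℕ} (hd_anti : Antitone d) (hc : Antitone c)
    (hmaj : ∀ k, k ≤ n → P c k ≤ P d k) (htotP : P c n = P d n) (hne : c ≠ d) :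
    ∃ (c' : Fin n → ℕ) (j k : Fin n),
      Antitone c' ∧ (∀ l, l ≤ n → P c' l ≤ P d l) ∧ (P c' n = P d n) ∧
      (∀ l, l ≤ n → P c l ≤ P c' l) ∧ (P c (j.1 + 1) < P c' (j.1 + 1)) ∧ j.1 + 1 ≤ n ∧
      j < k ∧ c' j = c j + 1 ∧ c' k + 1 = c k ∧ (∀ l, l ≠ j → l ≠ k → c' l = c l) := by
  classical
  -- the first index where c and d differ
  have hjne : (univ.filter fun j : Fin n => c j ≠ d j).Nonempty := by
    obtain ⟨j, hj⟩ := Function.ne_iff.mp hne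
    exact ⟨j, by simpa using hj⟩
  set j : Fin n := (univ.filter fun j : Fin n => c j ≠ d j).min' hjne with hjdef
  have hj : c j ≠ d j := by
    have := Finset.min'_mem _ hjne
    simpa using this
  have hjlt : ∀ a : Fin n, a < j → c a = d a := by
    intro a ha
    by_contra h
    exact absurd (Finset.min'_le _ a (by simpa using h)) (not_lt.mpr · ha)
  have hPj : ∀ l, l ≤ j.1 → P c l = P d l := by
    intro l hl
    apply Finset.sum_congr rfl
    intro a ha
    simp only [mem_filter, mem_univ, true_and] at ha
    exact hjlt a (by rw [Fin.lt_def]; omega)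
  have hcj : c j < d j := by
    have h1 := hmaj (j.1 + 1) j.isLt
    rw [P_succ' c j, P_succ' d j] at h1
    have h2 := hPj j.1 le_rfl
    omega
  have hjn : j.1 + 1 < n := by
    rcases lt_or_eq_of_le (Nat.succ_le_of_lt j.isLt) with h | h
    · exact h
    · exfalso
      have h1 : P c (j.1 + 1) = P d (j.1 + 1) := by
        have h' : j.1 + 1 = n := h
        rw [h']; exact htotP
      rw [P_succ' c j, P_succ' d j] at h1
      have h2 := hPj j.1 le_rfl
      omega
  have hstrict1 : P c (j.1 + 1) < P d (j.1 + 1) := by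
    rw [P_succ' c j, P_succ' d j]
    have h2 := hPj j.1 le_rfl
    omega
  -- choice of k
  set kprop : Fin n → Prop := fun l =>
    j < l ∧ (P c (l.1 + 1) = P d (l.1 + 1) ∨ l.1 + 1 = n ∨
      ∀ h : l.1 + 1 < n, c ⟨l.1 + 1, h⟩ < c l) with hkprop
  have hn0 : 0 < n := j.pos
  have hlast : kprop ⟨n - 1, by omega⟩ := by
    refine ⟨?_, Or.inr (Or.inl (show n - 1 + 1 = n by omega))⟩
    rw [Fin.lt_def]
    show j.1 < n - 1
    omega
  have hkne : (univ.filter kprop).Nonempty :=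
    ⟨⟨n - 1, by omega⟩, Finset.mem_filter.mpr ⟨Finset.mem_univ _, hlast⟩⟩
  set k : Fin n := (univ.filter kprop).min' hkne with hkdef
  have hk : kprop k := (Finset.mem_filter.mp (Finset.min'_mem _ hkne)).2
  have hjk : j < k := hk.1
  have hkn : k.1 < n := k.isLt
  -- strictness of majorization on (j, k]
  have hstr : ∀ l, j.1 + 1 ≤ l → l ≤ k.1 → P c l < P d l := by
    intro l hl1 hl2
    induction l, hl1 using Nat.le_induction with
    | base => exact hstrict1
    | succ l hl IH =>
      have hlk : l < k.1 := by omega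
      have hlf : l < n := by omega
      set lf : Fin n := ⟨l, hlf⟩ with hlfdef
      have hlf1 : j < lf := by rw [Fin.lt_def]; show j.1 < l; omega
      have hlf2 : lf < k := by rw [Fin.lt_def]; show l < k.1; omega
      have hnot : ¬ kprop lf := fun hmem =>
        absurd (Finset.min'_le _ lf (Finset.mem_filter.mpr ⟨Finset.mem_univ lf, hmem⟩))
          (not_le.mpr hlf2)
      have hne' : P c (l + 1) ≠ P d (l + 1) := by
        intro h
        exact hnot ⟨hlf1, Or.inl h⟩
      have hle' : P c (l + 1) ≤ P d (l + 1) := hmaj _ (by omega)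
      omega
  -- c k is positive
  have hck1 : 1 ≤ c k := by
    by_contra hck
    push_neg at hck
    have hck0 : c k = 0 := by omega
    have hzero : ∀ l : Fin n, k ≤ l → c l = 0 := by
      intro l hl
      have := hc hl
      omega
    have hsplit : P c n = P c k.1 +
        ∑ l ∈ univ.filter (fun l : Fin n => ¬ l.1 < k.1), c l := by
      rw [P_of_ge c le_rfl, P]
      exact (Finset.sum_filter_add_sum_filter_not univ _ c).symm
    have hzero2 : ∑ l ∈ univ.filter (fun l : Fin n => ¬ l.1 < k.1), c l = 0 := by
      apply Finset.sum_eq_zero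
      intro l hl
      simp only [mem_filter, mem_univ, true_and, not_lt] at hl
      exact hzero l (by rw [Fin.le_def]; omega)
    have h1 : P c k.1 < P d k.1 := hstr k.1 (by omega) le_rfl
    have h2 : P d k.1 ≤ P d n := P_mono d (le_of_lt hkn)
    omega
  have hjkne : j ≠ k := ne_of_lt hjk
  set c' : Fin n → ℕ := Function.update (Function.update c j (c j + 1)) k (c k - 1)
    with hc'def
  have hc'j : c' j = c j + 1 := by
    rw [hc'def, Function.update_of_ne hjkne, Function.update_self]
  have hc'k : c' k = c k - 1 := by rw [hc'def, Function.update_self]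
  have hc'k1 : c' k + 1 = c k := by omega
  have hc'l : ∀ l, l ≠ j → l ≠ k → c' l = c l := by
    intro l hlj hlk
    rw [hc'def, Function.update_of_ne hlk, Function.update_of_ne hlj]
  -- F2 : entries after k are strictly below c k
  have F2 : ∀ b : Fin n, k < b → c b < c k := by
    intro b hb
    have hkn1 : k.1 + 1 < n := by
      have := b.isLt
      rw [Fin.lt_def] at hb
      omega
    set succk : Fin n := ⟨k.1 + 1, hkn1⟩ with hsk
    have hsb : succk ≤ b := by rw [Fin.le_def]; rw [Fin.lt_def] at hb; show k.1 + 1 ≤ b.1; omega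
    have hmain : c succk < c k := by
      rcases hk.2 with hcase | hcase | hcase
      · -- P c (k+1) = P d (k+1)
        have h1 : P c k.1 < P d k.1 := hstr k.1 (by rw [Fin.lt_def] at hjk; omega) le_rfl
        have h2 : P c (k.1 + 1) = P c k.1 + c k := P_succ' c k
        have h3 : P d (k.1 + 1) = P d k.1 + d k := P_succ' d k
        have hckd : d k < c k := by omega
        by_contra hge
        push_neg at hge
        have hceq : c succk = c k := le_antisymm (hc (by rw [Fin.le_def]; show k.1 ≤ k.1 + 1; omega)) hge
        have h4 : P c (k.1 + 2) ≤ P d (k.1 + 2) := hmaj _ (by omega)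
        have h5 : P c (k.1 + 2) = P c (k.1 + 1) + c succk := P_succ' c succk
        have h6 : P d (k.1 + 2) = P d (k.1 + 1) + d succk := P_succ' d succk
        have h7 : d succk ≤ d k := hd_anti (by rw [Fin.le_def]; show k.1 ≤ k.1 + 1; omega)
        omega
      · omega
      · exact hcase hkn1
    exact lt_of_le_of_lt (hc hsb) hmain
  -- F1 : entries before j are at least c j + 1
  have F1 : ∀ a : Fin n, a < j → c j + 1 ≤ c a := by
    intro a ha
    have h1 : c a = d a := hjlt a ha
    have h2 : d j ≤ d a := hd_anti (le_of_lt ha)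
    omega
  -- Antitone c'
  have hc'anti : Antitone c' := by
    intro a b hab
    rcases eq_or_ne a j with rfl | haj
    · rcases eq_or_ne b j with rfl | hbj
      · exact le_rfl
      · rcases eq_or_ne b k with rfl | hbk
        · rw [hc'k, hc'j]
          have := hc hab
          omega
        · rw [hc'l b hbj hbk, hc'j]
          have := hc hab
          omega
    · rcases eq_or_ne a k with rfl | hak
      · rcases eq_or_ne b k with rfl | hbk
        · exact le_rfl
        · have hkb : k < b := lt_of_le_of_ne hab (fun h => hbk h.symm)
          have hbj : b ≠ j := by
            intro h
            rw [h] at hkb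
            exact absurd (lt_trans hjk hkb) (lt_irrefl j)
          rw [hc'l b hbj hbk, hc'k]
          have := F2 b hkb
          omega
      · rcases eq_or_ne b j with rfl | hbj
        · have haj' : a < j := lt_of_le_of_ne hab haj
          rw [hc'j, hc'l a haj hak]
          exact F1 a haj'
        · rcases eq_or_ne b k with rfl | hbk
          · rw [hc'k, hc'l a haj hak]
            have := hc hab
            omega
          · rw [hc'l b hbj hbk, hc'l a haj hak]
            exact hc hab
  -- prefix sums of c'
  have hP1 : ∀ l, l ≤ j.1 → P c' l = P c l := by
    intro l hl
    apply Finset.sum_congr rfl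
    intro a ha
    simp only [mem_filter, mem_univ, true_and] at ha
    have h1 : a ≠ j := by intro h; rw [h] at ha; omega
    have h2 : a ≠ k := by
      intro h; rw [h] at ha
      rw [Fin.lt_def] at hjk
      omega
    exact hc'l a h1 h2
  have hP2 : ∀ l, j.1 < l → l ≤ k.1 → P c' l = P c l + 1 := by
    intro l hl1 hl2
    set s := univ.filter (fun a : Fin n => a.1 < l) with hs
    have hjs : j ∈ s := by simp [hs, hl1]
    have e1 : ∑ a ∈ s, c' a = c' j + ∑ a ∈ s.erase j, c' a :=
      (Finset.add_sum_erase s c' hjs).symm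
    have e2 : ∑ a ∈ s, c a = c j + ∑ a ∈ s.erase j, c a :=
      (Finset.add_sum_erase s c hjs).symm
    have e3 : ∑ a ∈ s.erase j, c' a = ∑ a ∈ s.erase j, c a := by
      apply Finset.sum_congr rfl
      intro a ha
      have h1 : a ≠ j := Finset.ne_of_mem_erase ha
      have h2 : a ≠ k := by
        intro h
        have := Finset.mem_of_mem_erase ha
        simp only [hs, mem_filter, mem_univ, true_and] at this
        rw [h] at this
        omega
      exact hc'l a h1 h2
    show ∑ a ∈ s, c' a = (∑ a ∈ s, c a) + 1
    rw [e1, e2, e3, hc'j]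
    ring
  have hP3 : ∀ l, k.1 < l → P c' l = P c l := by
    intro l hl
    set s := univ.filter (fun a : Fin n => a.1 < l) with hs
    have hjs : j ∈ s := by
      simp only [hs, mem_filter, mem_univ, true_and]
      rw [Fin.lt_def] at hjk
      omega
    have hks : k ∈ s.erase j := by
      rw [Finset.mem_erase]
      exact ⟨(ne_of_lt hjk).symm, by simp [hs, hl]⟩
    have e1 : ∑ a ∈ s, c' a = c' j + ∑ a ∈ s.erase j, c' a :=
      (Finset.add_sum_erase s c' hjs).symm
    have e2 : ∑ a ∈ s, c a = c j + ∑ a ∈ s.erase j, c a :=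
      (Finset.add_sum_erase s c hjs).symm
    have e3 : ∑ a ∈ s.erase j, c' a = c' k + ∑ a ∈ (s.erase j).erase k, c' a :=
      (Finset.add_sum_erase _ c' hks).symm
    have e4 : ∑ a ∈ s.erase j, c a = c k + ∑ a ∈ (s.erase j).erase k, c a :=
      (Finset.add_sum_erase _ c hks).symm
    have e5 : ∑ a ∈ (s.erase j).erase k, c' a = ∑ a ∈ (s.erase j).erase k, c a := by
      apply Finset.sum_congr rfl
      intro a ha
      exact hc'l a (Finset.ne_of_mem_erase (Finset.mem_of_mem_erase ha))
        (Finset.ne_of_mem_erase ha)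
    show ∑ a ∈ s, c' a = ∑ a ∈ s, c a
    rw [e1, e2, e3, e4, e5, hc'j, hc'k]
    omega
  refine ⟨c', j, k, hc'anti, ?_, ?_, ?_, ?_, le_of_lt hjn, hjk, hc'j, hc'k1, hc'l⟩
  · intro l hl
    rcases le_or_gt l j.1 with h | h
    · rw [hP1 l h]; exact hmaj l hl
    · rcases le_or_gt l k.1 with h' | h'
      · rw [hP2 l h h']
        exact hstr l (by omega) h'
      · rw [hP3 l h']; exact hmaj l hl
  · rw [hP3 n hkn]; exact htotP
  · intro l hl
    rcases le_or_gt l j.1 with h | h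
    · rw [hP1 l h]
    · rcases le_or_gt l k.1 with h' | h'
      · rw [hP2 l h h']; omega
      · rw [hP3 l h']
  · rw [hP2 (j.1 + 1) (by omega) (by rw [Fin.lt_def] at hjk; omega)]
    omega


lemma c_eq_d_of_P_eq {d c : Fin n → ℕ} (h : ∀ l, l ≤ n → P c l = P d l) : c = d := by
  funext a
  have h1 := P_succ' c a
  have h2 := P_succ' d a
  have e1 := h a.1 (le_of_lt a.isLt)
  have e2 := h (a.1 + 1) a.isLt
  omega

lemma build {m : ℕ} (r : Fin m → ℕ) (hr : ∀ i, r i ≤ n) (d : Fin n → ℕ)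
    (hd : ∀ j : Fin n, d j = (univ.filter (fun i : Fin m => j.1 + 1 ≤ r i)).card)
    (hd_anti : Antitone d) :
    ∀ N (c : Fin n → ℕ), Antitone c → (∀ k, k ≤ n → P c k ≤ P d k) → P c n = P d n →
      (∑ l ∈ Finset.range (n + 1), P d l) ≤ (∑ l ∈ Finset.range (n + 1), P c l) + N →
      ∃ A : Fin m → Fin n → ℕ, (∀ i j, A i j = 0 ∨ A i j = 1) ∧ (∀ i, ∑ j, A i j = r i) ∧
        ∀ j, ∑ i, A i j = c j := by
  have hstair : ∀ c : Fin n → ℕ, c = d →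
      ∃ A : Fin m → Fin n → ℕ, (∀ i j, A i j = 0 ∨ A i j = 1) ∧ (∀ i, ∑ j, A i j = r i) ∧
        ∀ j, ∑ i, A i j = c j := by
    intro c hcd
    obtain ⟨A, h1, h2, h3⟩ := staircase m r hr
    refine ⟨A, h1, h2, fun j => ?_⟩
    rw [h3 j, ← hd j, ← hcd]
  intro N
  induction N with
  | zero =>
    intro c hc hmaj htot hN
    apply hstair
    apply c_eq_d_of_P_eq
    by_contra hcon
    push_neg at hcon
    obtain ⟨l, hl, hlne⟩ := hcon
    have hstrict : P c l < P d l := lt_of_le_of_ne (hmaj l hl) hlne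
    have : ∑ l ∈ Finset.range (n + 1), P c l < ∑ l ∈ Finset.range (n + 1), P d l :=
      Finset.sum_lt_sum (fun i hi => hmaj i (by simp only [Finset.mem_range] at hi; omega))
        ⟨l, by simp only [Finset.mem_range]; omega, hstrict⟩
    omega
  | succ N IH =>
    intro c hc hmaj htot hN
    by_cases hcd : c = d
    · exact hstair c hcd
    · obtain ⟨c', j, k, h_anti, h_maj, h_tot, h_le, h_strict, hjn, hjk, hc'j, hc'k1, hc'l⟩ :=
        move hd_anti hc hmaj htot hcd
      have hsum : ∑ l ∈ Finset.range (n + 1), P c l < ∑ l ∈ Finset.range (n + 1), P c' l :=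
        Finset.sum_lt_sum (fun i hi => h_le i (by simp only [Finset.mem_range] at hi; omega))
          ⟨j.1 + 1, by simp only [Finset.mem_range]; omega, h_strict⟩
      obtain ⟨A', hA1, hA2, hA3⟩ := IH c' h_anti h_maj h_tot (by omega)
      have hckj : c k ≤ c j := hc (le_of_lt hjk)
      have hgt : ∑ i, A' i k < ∑ i, A' i j := by
        rw [hA3 j, hA3 k]
        omega
      obtain ⟨B, hB1, hB2, hB3, hB4, hB5⟩ := swap_matrix A' hA1 j k (ne_of_lt hjk) hgt
      refine ⟨B, hB1, fun i => by rw [hB2 i, hA2 i], ?_⟩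
      intro l
      rcases eq_or_ne l j with rfl | hlj
      · have h := hB3
        rw [hA3] at h
        omega
      · rcases eq_or_ne l k with rfl | hlk
        · rw [hB4, hA3]
          omega
        · rw [hB5 l hlj hlk, hA3 l]
          exact hc'l l hlj hlk


lemma Pd_eq {m : ℕ} (r : Fin m → ℕ) (d : Fin n → ℕ)
    (hd : ∀ j : Fin n, d j = (univ.filter (fun i : Fin m => j.1 + 1 ≤ r i)).card)
    {k : ℕ} (hk : k ≤ n) :
    P d k = ∑ i, min k (r i) := by
  unfold P
  have e1 : ∀ j : Fin n, d j = ∑ i : Fin m, if j.1 + 1 ≤ r i then 1 else 0 := by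
    intro j
    rw [hd j, Finset.card_filter]
  calc ∑ j ∈ univ.filter (fun j : Fin n => j.1 < k), d j
      = ∑ j ∈ univ.filter (fun j : Fin n => j.1 < k), ∑ i : Fin m,
          if j.1 + 1 ≤ r i then 1 else 0 := Finset.sum_congr rfl (fun j _ => e1 j)
    _ = ∑ i : Fin m, ∑ j ∈ univ.filter (fun j : Fin n => j.1 < k),
          (if j.1 + 1 ≤ r i then (1 : ℕ) else 0) := Finset.sum_comm
    _ = ∑ i : Fin m, min k (r i) := by
        apply Finset.sum_congr rfl
        intro i _
        rw [Finset.sum_filter]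
        have hcong : ∀ j : Fin n,
            (if j.1 < k then (if j.1 + 1 ≤ r i then (1 : ℕ) else 0) else 0)
              = (if j.1 < min k (r i) then 1 else 0) := by
          intro j
          rw [← ite_and]
          refine if_congr ?_ rfl rfl
          constructor <;> intro <;> omega
        rw [Finset.sum_congr rfl fun j _ => hcong j]
        exact sum_ite_lt (le_trans (min_le_left _ _) hk)

lemma d_antitone {m : ℕ} (r : Fin m → ℕ) (d : Fin n → ℕ)
    (hd : ∀ j : Fin n, d j = (univ.filter (fun i : Fin m => j.1 + 1 ≤ r i)).card) :
    Antitone d := by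
  intro a b hab
  rw [hd a, hd b]
  apply Finset.card_le_card
  intro i hi
  simp only [mem_filter, mem_univ, true_and] at hi ⊢
  rw [Fin.le_def] at hab
  omega

lemma matrix_side {m : ℕ} (r : Fin m → ℕ) (hr : ∀ i, r i ≤ n) (d : Fin n → ℕ)
    (hd : ∀ j : Fin n, d j = (univ.filter (fun i : Fin m => j.1 + 1 ≤ r i)).card)
    (A : Fin m → Fin n → ℕ) (h01 : ∀ i j, A i j = 0 ∨ A i j = 1)
    (hrow : ∀ i, ∑ j, A i j = r i) :
    ∃ (c : Fin n → ℕ) (e : Equiv.Perm (Fin n)), Antitone c ∧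
      (∀ k, k ≤ n → P c k ≤ P d k) ∧ (P c n = P d n) ∧
      (∀ j, c j = ∑ i, A i (e j)) := by
  set s : Fin n → ℕ := fun j => ∑ i, A i j with hs
  set e : Equiv.Perm (Fin n) := Fin.revPerm.trans (Tuple.sort s) with he
  refine ⟨fun j => s (e j), e, ?_, ?_, ?_, fun j => rfl⟩
  · intro a b hab
    have h1 : Fin.rev b ≤ Fin.rev a := Fin.rev_le_rev.mpr hab
    have h2 := Tuple.monotone_sort s h1
    simpa [he] using h2
  · intro k hk
    have hinj : Function.Injective e := e.injective
    set F := univ.filter (fun j : Fin n => j.1 < k) with hF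
    set T := F.image e with hT
    have hsum : ∑ j ∈ F, s (e j) = ∑ x ∈ T, s x :=
      (Finset.sum_image (fun a _ b _ h => hinj h)).symm
    have hcard : T.card = k := by
      rw [hT, Finset.card_image_of_injective _ hinj, hF, card_filter_lt hk]
    have hbound : ∀ i : Fin m, ∑ x ∈ T, A i x ≤ min k (r i) := by
      intro i
      apply le_min
      · calc ∑ x ∈ T, A i x ≤ ∑ x ∈ T, 1 := by
              apply Finset.sum_le_sum
              intro x _
              rcases h01 i x with h | h <;> omega
          _ = k := by rw [Finset.sum_const, smul_eq_mul, mul_one, hcard]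
      · calc ∑ x ∈ T, A i x ≤ ∑ x, A i x :=
              Finset.sum_le_sum_of_subset (Finset.subset_univ T)
          _ = r i := hrow i
    calc P (fun j => s (e j)) k = ∑ x ∈ T, s x := hsum
      _ = ∑ x ∈ T, ∑ i, A i x := rfl
      _ = ∑ i, ∑ x ∈ T, A i x := Finset.sum_comm
      _ ≤ ∑ i, min k (r i) := Finset.sum_le_sum (fun i _ => hbound i)
      _ = P d k := (Pd_eq r d hd hk).symm
  · rw [P_of_ge _ le_rfl, Pd_eq r d hd le_rfl]
    have h1 : ∑ j, s (e j) = ∑ j, s j := Equiv.sum_comp e s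
    rw [h1]
    have h2 : ∑ j, s j = ∑ i, r i := by
      rw [hs]
      rw [Finset.sum_comm]
      exact Finset.sum_congr rfl (fun i _ => hrow i)
    rw [h2]
    apply Finset.sum_congr rfl
    intro i _
    have := hr i
    omega

end CSO

/-- For a single function `f`, the minimum of `∑ⱼ f(cⱼ(A))` over (0,1)-matrices `A`
with row sums `r` equals the minimum of `∑ⱼ f(cⱼ)` over nonincreasing tuples `c`
majorized by the conjugate tuple `d`; both minima are attained and equal. -/
theorem columnSumOptimization_same_function (m n : ℕ) (hm : 0 < m) (hn : 0 < n)
    (r : Fin m → ℕ) (hr : ∀ i, r i ≤ n)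
    (d : Fin n → ℕ)
    (hd : ∀ j : Fin n, d j = (univ.filter (fun i : Fin m => j.1 + 1 ≤ r i)).card)
    (f : ℕ → ℤ) :
    ∃ v : ℤ,
      IsLeast {w : ℤ | ∃ A : Fin m → Fin n → ℕ,
          (∀ i j, A i j = 0 ∨ A i j = 1) ∧ (∀ i, ∑ j, A i j = r i) ∧
          w = ∑ j, f (∑ i, A i j)} v ∧
      IsLeast {w : ℤ | ∃ c : Fin n → ℕ, Antitone c ∧
          (∀ k : ℕ, 1 ≤ k → k ≤ n →
            ∑ j ∈ univ.filter (fun j : Fin n => j.1 < k), c j ≤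
              ∑ j ∈ univ.filter (fun j : Fin n => j.1 < k), d j) ∧
          ∑ j, c j = ∑ j, d j ∧
          w = ∑ j, f (c j)} v := by
  classical
  set S1 : Set ℤ := {w : ℤ | ∃ A : Fin m → Fin n → ℕ,
      (∀ i j, A i j = 0 ∨ A i j = 1) ∧ (∀ i, ∑ j, A i j = r i) ∧
      w = ∑ j, f (∑ i, A i j)} with hS1
  set S2 : Set ℤ := {w : ℤ | ∃ c : Fin n → ℕ, Antitone c ∧
      (∀ k : ℕ, 1 ≤ k → k ≤ n →
        ∑ j ∈ univ.filter (fun j : Fin n => j.1 < k), c j ≤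
          ∑ j ∈ univ.filter (fun j : Fin n => j.1 < k), d j) ∧
      ∑ j, c j = ∑ j, d j ∧
      w = ∑ j, f (c j)} with hS2
  have hd_anti : Antitone d := CSO.d_antitone r d hd
  -- S1 ⊆ S2
  have h12 : S1 ⊆ S2 := by
    rintro w ⟨A, h01, hrow, rfl⟩
    obtain ⟨c, e, hanti, hmaj, htot, hc⟩ := CSO.matrix_side r hr d hd A h01 hrow
    refine ⟨c, hanti, fun k _ hk2 => hmaj k hk2, ?_, ?_⟩
    · have h1 := htot
      rw [CSO.P_of_ge c le_rfl, CSO.P_of_ge d le_rfl] at h1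
      exact h1
    · have : ∀ j, f (c j) = (fun x => f (∑ i, A i x)) (e j) := by
        intro j
        rw [hc j]
      rw [Finset.sum_congr rfl fun j _ => this j]
      exact (Equiv.sum_comp e (fun x => f (∑ i, A i x))).symm
  -- S2 ⊆ S1
  have h21 : S2 ⊆ S1 := by
    rintro w ⟨c, hanti, hmaj, htot, rfl⟩
    have hmaj' : ∀ k, k ≤ n → CSO.P c k ≤ CSO.P d k := by
      intro k hk
      rcases Nat.eq_zero_or_pos k with rfl | hk1
      · rw [CSO.P_zero, CSO.P_zero]
      · exact hmaj k hk1 hk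
    have htotP : CSO.P c n = CSO.P d n := by
      rw [CSO.P_of_ge c le_rfl, CSO.P_of_ge d le_rfl]
      exact htot
    obtain ⟨A, h01, hrow, hcol⟩ := CSO.build r hr d hd hd_anti
      (∑ l ∈ Finset.range (n + 1), CSO.P d l) c hanti hmaj' htotP (Nat.le_add_left _ _)
    refine ⟨A, h01, hrow, ?_⟩
    apply Finset.sum_congr rfl
    intro j _
    rw [hcol j]
  -- S1 is nonempty
  have hne : ∃ z : ℤ, z ∈ S1 := by
    obtain ⟨A, h1, h2, _⟩ := CSO.staircase m r hr
    exact ⟨∑ j, f (∑ i, A i j), A, h1, h2, rfl⟩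
  -- S1 is bounded below
  set L : ℤ := (Finset.range (m + 1)).inf' ⟨0, by simp⟩ f with hL
  have hbdd : ∀ z : ℤ, z ∈ S1 → (∑ _j : Fin n, L) ≤ z := by
    rintro z ⟨A, h01, hrow, rfl⟩
    apply Finset.sum_le_sum
    intro j _
    apply Finset.inf'_le
    rw [Finset.mem_range]
    have : ∑ i, A i j ≤ m := by
      calc ∑ i, A i j ≤ ∑ _i : Fin m, 1 := by
            apply Finset.sum_le_sum
            intro i _
            rcases h01 i j with h | h <;> omega
        _ = m := by simp
    omega
  obtain ⟨v, hv1, hv2⟩ := Int.exists_least_of_bdd ⟨∑ _j : Fin n, L, hbdd⟩ hne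
  exact ⟨v, ⟨hv1, fun z hz => hv2 z hz⟩,
    ⟨h12 hv1, fun z hz => hv2 z (h21 hz)⟩⟩
end

section
/- Let m, n be positive integers, let r = (r_1, …, r_m) be integers with 0 ≤ r_i ≤ n for all i, let d = (d_1, …, d_n) be the conjugate tuple of r, and let f_1, …, f_n : {0,1,…,m} → ℤ be arbitrary functions. Then the minimum of ∑_{j=1}^n f_j(c_j(A)) over all matrices A ∈ {0,1}^{m×n} with row sums r_i(A) = r_i for all i equals the minimum of ∑_{j=1}^n f_j(c_j) over all tuples c = (c_1, …, c_n) of nonnegative integers whose nonincreasing rearrangement is majorized by d; in particular, both feasible sets are nonempty and both minima are attained. -/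
open Finset

/-- Partial sum of the first `k` entries of a tuple indexed by `Fin n`. -/
def ParSum {n : ℕ} (g : Fin n → ℕ) (k : ℕ) : ℕ :=
  ∑ j ∈ univ.filter (fun j : Fin n => j.1 < k), g j

lemma ParSum_zero {n : ℕ} (g : Fin n → ℕ) : ParSum g 0 = 0 := by
  simp [ParSum]

lemma ParSum_succ {n : ℕ} (g : Fin n → ℕ) (t : ℕ) (hk : t < n) :
    ParSum g (t + 1) = ParSum g t + g ⟨t, hk⟩ := by
  have h : univ.filter (fun j : Fin n => j.1 < t + 1)
      = insert ⟨t, hk⟩ (univ.filter (fun j : Fin n => j.1 < t)) := by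
    ext j; simp [Fin.ext_iff]; omega
  rw [ParSum, ParSum, h, Finset.sum_insert (by simp)]
  ring

lemma ParSum_ge {n : ℕ} (g : Fin n → ℕ) (k : ℕ) (hk : n ≤ k) :
    ParSum g k = ∑ j, g j := by
  rw [ParSum, Finset.filter_true_of_mem (fun j _ => lt_of_lt_of_le j.2 hk)]

lemma card_filter_lt (n t : ℕ) :
    (univ.filter (fun j : Fin n => j.1 < t)).card = min t n := by
  rw [Finset.card_filter, Fin.sum_univ_eq_sum_range (fun j => if j < t then 1 else 0)]
  rw [← Finset.card_filter]
  have : (Finset.range n).filter (· < t) = Finset.range (min t n) := by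
    ext x; simp [Nat.lt_min, and_comm]
  rw [this, Finset.card_range]

/-- The canonical matrix: row `i` has ones in the first `r i` columns. -/
lemma canonical_matrix (m n : ℕ) (r : Fin m → ℕ) (hr : ∀ i, r i ≤ n)
    (d : Fin n → ℕ)
    (hd : ∀ j : Fin n, d j = (univ.filter (fun i : Fin m => j.1 + 1 ≤ r i)).card) :
    ∃ A : Fin m → Fin n → ℕ, (∀ i j, A i j = 0 ∨ A i j = 1) ∧
      (∀ i, ∑ j, A i j = r i) ∧ (∀ j, ∑ i, A i j = d j) := by
  refine ⟨fun i j => if j.1 < r i then 1 else 0, ?_, ?_, ?_⟩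
  · intro i j; by_cases h : j.1 < r i <;> simp [h]
  · intro i
    rw [← Finset.card_filter]
    have h1 := card_filter_lt n (r i)
    have h2 := hr i
    omega
  · intro j
    rw [hd j, ← Finset.card_filter]
    congr 1

/-- Swap a one from column `J` to column `K` in some row. -/
lemma swap_col {m n : ℕ} (A : Fin m → Fin n → ℕ)
    (h01 : ∀ i j, A i j = 0 ∨ A i j = 1) (J K : Fin n) (hJK : J ≠ K)
    (hlt : ∑ i, A i K < ∑ i, A i J) :
    ∃ B : Fin m → Fin n → ℕ, (∀ i j, B i j = 0 ∨ B i j = 1) ∧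
      (∀ i, ∑ j, B i j = ∑ j, A i j) ∧
      ((∑ i, B i J) + 1 = ∑ i, A i J) ∧ (∑ i, B i K = (∑ i, A i K) + 1) ∧
      (∀ l, l ≠ J → l ≠ K → ∑ i, B i l = ∑ i, A i l) := by
  have hex : ∃ i, A i J = 1 ∧ A i K = 0 := by
    by_contra h
    push_neg at h
    have hle : ∀ i, A i J ≤ A i K := by
      intro i
      have h1 := h01 i J
      have h2 := h01 i K
      have h3 := h i
      rcases h1 with h1 | h1 <;> rcases h2 with h2 | h2 <;> omega
    have := Finset.sum_le_sum (s := univ) fun i _ => hle i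
    omega
  obtain ⟨i, hiJ, hiK⟩ := hex
  refine ⟨fun i' j' => if i' = i ∧ j' = J then 0 else if i' = i ∧ j' = K then 1 else A i' j',
    ?_, ?_, ?_, ?_, ?_⟩
  · intro i' j'
    dsimp only
    split_ifs with h1 h2
    · left; rfl
    · right; rfl
    · exact h01 i' j'
  · intro i'
    by_cases hi : i' = i
    · subst hi
      have key : ∀ j', ((if i' = i' ∧ j' = J then 0 else if i' = i' ∧ j' = K then 1 else A i' j')
          + if j' = J then 1 else 0) = A i' j' + (if j' = K then 1 else 0) := by
        intro j'
        by_cases h1 : j' = J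
        · subst h1; simp [hJK, hiJ]
        · by_cases h2 : j' = K
          · subst h2; simp [h1, hiK]
          · simp [h1, h2]
      have hs : ∑ j', ((if i' = i' ∧ j' = J then 0 else if i' = i' ∧ j' = K then 1 else A i' j')
          + if j' = J then 1 else 0) = ∑ j', (A i' j' + if j' = K then 1 else 0) :=
        Finset.sum_congr rfl fun j' _ => key j'
      rw [Finset.sum_add_distrib, Finset.sum_add_distrib,
        Finset.sum_ite_eq' univ J (fun _ => 1), Finset.sum_ite_eq' univ K (fun _ => 1)] at hs
      simpa using hs
    · refine Finset.sum_congr rfl fun j' _ => ?_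
      simp [hi]
  · have key : ∀ i', ((if i' = i ∧ J = J then 0 else if i' = i ∧ J = K then 1 else A i' J)
        + if i' = i then 1 else 0) = A i' J := by
      intro i'
      by_cases h1 : i' = i
      · subst h1; simp [hiJ]
      · simp [h1]
    have hs : ∑ i', ((if i' = i ∧ J = J then 0 else if i' = i ∧ J = K then 1 else A i' J)
        + if i' = i then 1 else 0) = ∑ i', A i' J :=
      Finset.sum_congr rfl fun i' _ => key i'
    rw [Finset.sum_add_distrib, Finset.sum_ite_eq' univ i (fun _ => 1)] at hs
    simpa using hs
  · have key : ∀ i', (if i' = i ∧ K = J then 0 else if i' = i ∧ K = K then 1 else A i' K)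
        = A i' K + (if i' = i then 1 else 0) := by
      intro i'
      by_cases h1 : i' = i
      · subst h1; simp [Ne.symm hJK, hiK]
      · simp [h1]
    have hs : ∑ i', (if i' = i ∧ K = J then 0 else if i' = i ∧ K = K then 1 else A i' K)
        = ∑ i', (A i' K + if i' = i then 1 else 0) :=
      Finset.sum_congr rfl fun i' _ => key i'
    rw [Finset.sum_add_distrib, Finset.sum_ite_eq' univ i (fun _ => 1)] at hs
    simpa using hs
  · intro l hlJ hlK
    refine Finset.sum_congr rfl fun i' _ => ?_
    simp [hlJ, hlK]

lemma dsum_eq {m n : ℕ} (r : Fin m → ℕ) (hr : ∀ i, r i ≤ n) (d : Fin n → ℕ)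
    (hd : ∀ j : Fin n, d j = (univ.filter (fun i : Fin m => j.1 + 1 ≤ r i)).card)
    (k : ℕ) (hk : k ≤ n) :
    ∑ j ∈ univ.filter (fun j : Fin n => j.1 < k), d j = ∑ i, min (r i) k := by
  have h1 : ∀ j ∈ univ.filter (fun j : Fin n => j.1 < k),
      d j = ∑ i, (if j.1 + 1 ≤ r i then 1 else 0) := by
    intro j _; rw [hd j, Finset.card_filter]
  rw [Finset.sum_congr rfl h1, Finset.sum_comm]
  refine Finset.sum_congr rfl fun i _ => ?_
  rw [← Finset.card_filter, Finset.filter_filter]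
  have h2 : (univ.filter (fun j : Fin n => j.1 < k ∧ j.1 + 1 ≤ r i))
      = univ.filter (fun j : Fin n => j.1 < min k (r i)) := by
    ext j; simp
  rw [h2, card_filter_lt]
  have := hr i
  omega

lemma eq_of_parsum {n : ℕ} (c d : Fin n → ℕ)
    (h : ∀ k, k ≤ n → ParSum c k = ParSum d k) : c = d := by
  funext j
  obtain ⟨jv, hj⟩ := j
  have e1 := h jv (by omega)
  have e2 := h (jv + 1) (by omega)
  have h1 := ParSum_succ c jv hj
  have h2 := ParSum_succ d jv hj
  omega

/-- Hard direction: realize a majorized antitone tuple as column sums. -/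
lemma realize {m n : ℕ} (r : Fin m → ℕ) (hr : ∀ i, r i ≤ n) (d : Fin n → ℕ)
    (hd : ∀ j : Fin n, d j = (univ.filter (fun i : Fin m => j.1 + 1 ≤ r i)).card)
    (N : ℕ) :
    ∀ (c : Fin n → ℕ), Antitone c →
      (∀ k, k ≤ n → ParSum c k ≤ ParSum d k) → (ParSum c n = ParSum d n) →
      (∑ k ∈ Finset.range (n + 1), (ParSum d k - ParSum c k)) ≤ N →
      ∃ A : Fin m → Fin n → ℕ, (∀ i j, A i j = 0 ∨ A i j = 1) ∧
        (∀ i, ∑ j, A i j = r i) ∧ (∀ j, ∑ i, A i j = c j) := by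
  have hdanti : Antitone d := by
    intro p q hpq
    rw [hd p, hd q]
    refine Finset.card_le_card ?_
    intro i hi
    simp only [Finset.mem_filter, Finset.mem_univ, true_and] at hi ⊢
    have := Fin.le_def.mp hpq
    omega
  induction N with
  | zero =>
    intro c hmono hmaj hsum hmeas
    have hz := Finset.sum_eq_zero_iff.mp (Nat.le_zero.mp hmeas)
    have hcd : c = d := by
      refine eq_of_parsum c d fun k hk => ?_
      have h1 := hz k (Finset.mem_range.mpr (by omega))
      have h2 := hmaj k hk
      omega
    obtain ⟨A, h1, h2, h3⟩ := canonical_matrix m n r hr d hd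
    exact ⟨A, h1, h2, by rw [hcd]; exact h3⟩
  | succ N ih =>
    intro c hmono hmaj hsum hmeas
    by_cases hcd : c = d
    · obtain ⟨A, h1, h2, h3⟩ := canonical_matrix m n r hr d hd
      exact ⟨A, h1, h2, by rw [hcd]; exact h3⟩
    -- find the first index where the partial sums differ
    have hex : ∃ k, k ≤ n ∧ ParSum c k < ParSum d k := by
      by_contra h
      push_neg at h
      refine hcd (eq_of_parsum c d fun k hk => ?_)
      have h1 := h k hk
      have h2 := hmaj k hk
      omega
    have hex2 : ∃ k, ParSum c k < ParSum d k := ⟨hex.choose, hex.choose_spec.2⟩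
    set a := Nat.find hex2 with ha_def
    have ha : ParSum c a < ParSum d a := Nat.find_spec hex2
    have han : a ≤ n := le_trans (Nat.find_min' hex2 hex.choose_spec.2) hex.choose_spec.1
    have ha0 : 1 ≤ a := by
      rcases Nat.eq_zero_or_pos a with h | h
      · exfalso
        rw [h, ParSum_zero, ParSum_zero] at ha
        omega
      · exact h
    have haprev : ∀ t, t < a → ParSum c t = ParSum d t := by
      intro t ht
      have h1 := Nat.find_min hex2 ht
      have h2 := hmaj t (by omega)
      omega
    -- find the first index ≥ a where partial sums agree again
    have hpn : a ≤ n ∧ ParSum c (n + 1) = ParSum d (n + 1) := by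
      refine ⟨han, ?_⟩
      rw [ParSum_ge c (n + 1) (by omega), ParSum_ge d (n + 1) (by omega),
        ← ParSum_ge c n le_rfl, ← ParSum_ge d n le_rfl]
      exact hsum
    have hexb : ∃ t, a ≤ t ∧ ParSum c (t + 1) = ParSum d (t + 1) := ⟨n, hpn⟩
    set b := Nat.find hexb with hb_def
    obtain ⟨hab, hb⟩ : a ≤ b ∧ ParSum c (b + 1) = ParSum d (b + 1) := Nat.find_spec hexb
    have hbn' : b ≤ n := Nat.find_min' hexb hpn
    have hstrict : ∀ t, a ≤ t → t ≤ b → ParSum c t < ParSum d t := by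
      intro t h1 h2
      rcases Nat.eq_or_lt_of_le h1 with h3 | h3
      · rw [← h3]; exact ha
      · have h4 := Nat.find_min hexb (show t - 1 < b by omega)
        push_neg at h4
        have h5 := h4 (by omega)
        have h6 : t - 1 + 1 = t := by omega
        rw [h6] at h5
        have h7 := hmaj t (by omega)
        omega
    have hbn : b < n := by
      rcases Nat.lt_or_ge b n with h | h
      · exact h
      · exfalso
        have h1 := hstrict b hab le_rfl
        have h2 : b = n := le_antisymm hbn' h
        rw [h2] at h1
        omega
    have hJp : a - 1 < n := by omega
    have hab2 : a - 1 < b := by omega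
    -- key values at the two special indices
    have hsa : a - 1 + 1 = a := by omega
    have hsucc_ca : ParSum c a = ParSum c (a - 1) + c ⟨a - 1, hJp⟩ := by
      have h1 := ParSum_succ c (a - 1) hJp
      rw [hsa] at h1
      exact h1
    have hsucc_da : ParSum d a = ParSum d (a - 1) + d ⟨a - 1, hJp⟩ := by
      have h1 := ParSum_succ d (a - 1) hJp
      rw [hsa] at h1
      exact h1
    have hcJ : c ⟨a - 1, hJp⟩ < d ⟨a - 1, hJp⟩ := by
      have h3 := haprev (a - 1) (by omega)
      omega
    have hsucc_cb : ParSum c (b + 1) = ParSum c b + c ⟨b, hbn⟩ := ParSum_succ c b hbn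
    have hsucc_db : ParSum d (b + 1) = ParSum d b + d ⟨b, hbn⟩ := ParSum_succ d b hbn
    have hcK : d ⟨b, hbn⟩ < c ⟨b, hbn⟩ := by
      have h1 := hstrict b hab le_rfl
      omega
    have hcK1 : 1 ≤ c ⟨b, hbn⟩ := by omega
    have hJKne : (⟨a - 1, hJp⟩ : Fin n) ≠ ⟨b, hbn⟩ := by
      simp only [ne_eq, Fin.mk.injEq]
      omega
    -- the two strictness facts needed for antitonicity
    have fact1 : ∀ x : Fin n, x.1 < a - 1 → c ⟨a - 1, hJp⟩ + 1 ≤ c x := by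
      intro x hx
      have hp : a - 2 < n := by omega
      have e1 := haprev (a - 1) (by omega)
      have e2 := haprev (a - 2) (by omega)
      have h1 := ParSum_succ c (a - 2) hp
      have h2 := ParSum_succ d (a - 2) hp
      have h3 : a - 2 + 1 = a - 1 := by omega
      rw [h3] at h1 h2
      have h4 : d ⟨a - 1, hJp⟩ ≤ d ⟨a - 2, hp⟩ := hdanti (Fin.mk_le_mk.mpr (by omega))
      have h5 : c ⟨a - 2, hp⟩ ≤ c x := hmono (Fin.le_def.mpr (show x.1 ≤ a - 2 by omega))
      omega
    have fact2 : ∀ x : Fin n, b < x.1 → c x + 1 ≤ c ⟨b, hbn⟩ := by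
      intro x hx
      have hp : b + 1 < n := by
        have := x.2
        omega
      have h1 : ParSum c (b + 2) = ParSum c (b + 1) + c ⟨b + 1, hp⟩ := ParSum_succ c (b + 1) hp
      have h2 : ParSum d (b + 2) = ParSum d (b + 1) + d ⟨b + 1, hp⟩ := ParSum_succ d (b + 1) hp
      have h3 := hmaj (b + 2) (by omega)
      have h4 : d ⟨b + 1, hp⟩ ≤ d ⟨b, hbn⟩ := hdanti (Fin.mk_le_mk.mpr (by omega))
      have h5 : c x ≤ c ⟨b + 1, hp⟩ := hmono (Fin.le_def.mpr (show b + 1 ≤ x.1 by omega))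
      omega
    -- the transfer tuple
    set c' : Fin n → ℕ := fun l =>
      if l = (⟨a - 1, hJp⟩ : Fin n) then c ⟨a - 1, hJp⟩ + 1
      else if l = (⟨b, hbn⟩ : Fin n) then c ⟨b, hbn⟩ - 1 else c l with hc'def
    have hc'J : c' ⟨a - 1, hJp⟩ = c ⟨a - 1, hJp⟩ + 1 := by simp [hc'def]
    have hc'K : c' ⟨b, hbn⟩ = c ⟨b, hbn⟩ - 1 := by simp [hc'def, Ne.symm hJKne]
    have hc'other : ∀ l, l ≠ (⟨a - 1, hJp⟩ : Fin n) → l ≠ (⟨b, hbn⟩ : Fin n) → c' l = c l := by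
      intro l h1 h2
      simp [hc'def, h1, h2]
    have master : ∀ S : Finset (Fin n),
        (∑ j ∈ S, c' j) + (if (⟨b, hbn⟩ : Fin n) ∈ S then 1 else 0)
          = (∑ j ∈ S, c j) + (if (⟨a - 1, hJp⟩ : Fin n) ∈ S then 1 else 0) := by
      intro S
      have h1 : ∀ j ∈ S, c' j + (if j = (⟨b, hbn⟩ : Fin n) then 1 else 0)
          = c j + (if j = (⟨a - 1, hJp⟩ : Fin n) then 1 else 0) := by
        intro j _
        by_cases hj1 : j = (⟨a - 1, hJp⟩ : Fin n)
        · subst hj1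
          rw [hc'J]
          simp [hJKne]
        · by_cases hj2 : j = (⟨b, hbn⟩ : Fin n)
          · subst hj2
            rw [hc'K]
            simp [hj1]
            omega
          · rw [hc'other j hj1 hj2]
            simp [hj1, hj2]
      have h2 := Finset.sum_congr rfl h1
      rw [Finset.sum_add_distrib, Finset.sum_add_distrib,
        Finset.sum_ite_eq' S (⟨b, hbn⟩ : Fin n) (fun _ => 1),
        Finset.sum_ite_eq' S (⟨a - 1, hJp⟩ : Fin n) (fun _ => 1)] at h2
      exact h2
    have hPc' : ∀ t, ParSum c' t + (if b < t then 1 else 0)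
        = ParSum c t + (if a - 1 < t then 1 else 0) := by
      intro t
      have h1 := master (univ.filter (fun j : Fin n => j.1 < t))
      have hKmem : ((⟨b, hbn⟩ : Fin n) ∈ univ.filter (fun j : Fin n => j.1 < t)) ↔ b < t := by
        simp
      have hJmem : ((⟨a - 1, hJp⟩ : Fin n) ∈ univ.filter (fun j : Fin n => j.1 < t)) ↔ a - 1 < t := by
        simp
      rw [if_congr hKmem rfl rfl, if_congr hJmem rfl rfl] at h1
      exact h1
    have hmaj' : ∀ k, k ≤ n → ParSum c' k ≤ ParSum d k := by
      intro k hk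
      have h1 := hPc' k
      by_cases h2 : a - 1 < k
      · by_cases h3 : b < k
        · simp [h2, h3] at h1
          have := hmaj k hk
          omega
        · have h4 := hstrict k (by omega) (by omega)
          simp [h2, h3] at h1
          omega
      · have h3 : ¬ b < k := by omega
        simp [h2, h3] at h1
        have := hmaj k hk
        omega
    have hsum' : ParSum c' n = ParSum d n := by
      have h1 := hPc' n
      simp [hbn, show a - 1 < n from hJp] at h1
      omega
    have hmono' : Antitone c' := by
      intro x y hxy
      have hxy' : x.1 ≤ y.1 := hxy
      by_cases hyJ : y = (⟨a - 1, hJp⟩ : Fin n)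
      · by_cases hxJ : x = (⟨a - 1, hJp⟩ : Fin n)
        · rw [hyJ, hxJ]
        · have hy1 : y.1 = a - 1 := by rw [hyJ]
          have hx2 : x.1 ≠ a - 1 := fun h => hxJ (Fin.ext h)
          have hx1 : x.1 < a - 1 := by omega
          have hxK : x ≠ (⟨b, hbn⟩ : Fin n) := by
            intro h
            have hxb : x.1 = b := by rw [h]
            omega
          rw [hyJ, hc'J, hc'other x hxJ hxK]
          exact fact1 x hx1
      · by_cases hyK : y = (⟨b, hbn⟩ : Fin n)
        · rw [hyK, hc'K]
          by_cases hxJ : x = (⟨a - 1, hJp⟩ : Fin n)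
          · rw [hxJ, hc'J]
            have h5 : c ⟨b, hbn⟩ ≤ c ⟨a - 1, hJp⟩ := hmono (Fin.mk_le_mk.mpr (by omega))
            omega
          · by_cases hxK : x = (⟨b, hbn⟩ : Fin n)
            · rw [hxK, hc'K]
            · rw [hc'other x hxJ hxK]
              have hy1 : y.1 = b := by rw [hyK]
              have h5 : c ⟨b, hbn⟩ ≤ c x := hmono (Fin.le_def.mpr (by omega))
              omega
        · rw [hc'other y hyJ hyK]
          by_cases hxJ : x = (⟨a - 1, hJp⟩ : Fin n)
          · rw [hxJ, hc'J]
            have h5 : c y ≤ c ⟨a - 1, hJp⟩ := hmono (by rw [← hxJ]; exact hxy)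
            omega
          · by_cases hxK : x = (⟨b, hbn⟩ : Fin n)
            · rw [hxK, hc'K]
              have hx1 : x.1 = b := by rw [hxK]
              have hy2 : y.1 ≠ b := fun h => hyK (Fin.ext h)
              have hy3 : b < y.1 := by omega
              have := fact2 y hy3
              omega
            · rw [hc'other x hxJ hxK]
              exact hmono hxy
    have hmeas' : ∑ k ∈ Finset.range (n + 1), (ParSum d k - ParSum c' k)
        < ∑ k ∈ Finset.range (n + 1), (ParSum d k - ParSum c k) := by
      apply Finset.sum_lt_sum
      · intro k _
        have h1 := hPc' k
        by_cases h2 : a - 1 < k <;> by_cases h3 : b < k <;> simp [h2, h3] at h1 <;> omega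
      · refine ⟨a, Finset.mem_range.mpr (by omega), ?_⟩
        have h1 := hPc' a
        simp [show ¬ b < a by omega, show a - 1 < a by omega] at h1
        omega
    obtain ⟨A', h01', hrow', hcol'⟩ := ih c' hmono' hmaj' hsum' (by omega)
    have hltJK : ∑ i, A' i (⟨b, hbn⟩ : Fin n) < ∑ i, A' i (⟨a - 1, hJp⟩ : Fin n) := by
      rw [hcol', hcol', hc'J, hc'K]
      have h5 : c ⟨b, hbn⟩ ≤ c ⟨a - 1, hJp⟩ := hmono (Fin.mk_le_mk.mpr (by omega))
      omega
    obtain ⟨B, hB01, hBrow, hBJ, hBK, hBo⟩ := swap_col A' h01' _ _ hJKne hltJK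
    refine ⟨B, hB01, fun i => by rw [hBrow i, hrow' i], fun j => ?_⟩
    by_cases hjJ : j = (⟨a - 1, hJp⟩ : Fin n)
    · subst hjJ
      have h1 := hcol' (⟨a - 1, hJp⟩ : Fin n)
      rw [h1, hc'J] at hBJ
      omega
    · by_cases hjK : j = (⟨b, hbn⟩ : Fin n)
      · subst hjK
        have h1 := hcol' (⟨b, hbn⟩ : Fin n)
        rw [h1, hc'K] at hBK
        omega
      · rw [hBo j hjJ hjK, hcol' j, hc'other j hjJ hjK]


/-- Easy direction: sums of column sums over any column set are bounded. -/
lemma colsum_bound {m n : ℕ} (r : Fin m → ℕ) (A : Fin m → Fin n → ℕ)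
    (h01 : ∀ i j, A i j = 0 ∨ A i j = 1) (hrow : ∀ i, ∑ j, A i j = r i)
    (S : Finset (Fin n)) :
    ∑ j ∈ S, (∑ i, A i j) ≤ ∑ i, min (r i) S.card := by
  rw [Finset.sum_comm]
  refine Finset.sum_le_sum fun i _ => ?_
  refine le_min ?_ ?_
  · rw [← hrow i]
    exact Finset.sum_le_sum_of_subset (Finset.subset_univ S)
  · have h1 : ∑ j ∈ S, A i j ≤ ∑ j ∈ S, 1 := by
      refine Finset.sum_le_sum fun j _ => ?_
      rcases h01 i j with h | h <;> omega
    simpa using h1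

/-- For arbitrary functions `f₁,…,fₙ`, the minimum of `∑ⱼ fⱼ(cⱼ(A))` over (0,1)-matrices
`A` with row sums `r` equals the minimum of `∑ⱼ fⱼ(cⱼ)` over tuples `c` whose
nonincreasing rearrangement is majorized by the conjugate tuple `d`;
both minima are attained and equal. -/
theorem columnSumOptimization_general (m n : ℕ) (hm : 0 < m) (hn : 0 < n)
    (r : Fin m → ℕ) (hr : ∀ i, r i ≤ n)
    (d : Fin n → ℕ)
    (hd : ∀ j : Fin n, d j = (univ.filter (fun i : Fin m => j.1 + 1 ≤ r i)).card)
    (f : Fin n → ℕ → ℤ) :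
    ∃ v : ℤ,
      IsLeast {w : ℤ | ∃ A : Fin m → Fin n → ℕ,
          (∀ i j, A i j = 0 ∨ A i j = 1) ∧ (∀ i, ∑ j, A i j = r i) ∧
          w = ∑ j, f j (∑ i, A i j)} v ∧
      IsLeast {w : ℤ | ∃ c : Fin n → ℕ, (∃ σ : Equiv.Perm (Fin n),
            Antitone (fun j => c (σ j)) ∧
            (∀ k : ℕ, 1 ≤ k → k ≤ n →
              ∑ j ∈ univ.filter (fun j : Fin n => j.1 < k), c (σ j) ≤
                ∑ j ∈ univ.filter (fun j : Fin n => j.1 < k), d j) ∧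
            ∑ j, c j = ∑ j, d j) ∧
          w = ∑ j, f j (c j)} v := by
  classical
  set SA : Set ℤ := {w : ℤ | ∃ A : Fin m → Fin n → ℕ,
      (∀ i j, A i j = 0 ∨ A i j = 1) ∧ (∀ i, ∑ j, A i j = r i) ∧
      w = ∑ j, f j (∑ i, A i j)} with hSA
  set SB : Set ℤ := {w : ℤ | ∃ c : Fin n → ℕ, (∃ σ : Equiv.Perm (Fin n),
      Antitone (fun j => c (σ j)) ∧
      (∀ k : ℕ, 1 ≤ k → k ≤ n →
        ∑ j ∈ univ.filter (fun j : Fin n => j.1 < k), c (σ j) ≤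
          ∑ j ∈ univ.filter (fun j : Fin n => j.1 < k), d j) ∧
      ∑ j, c j = ∑ j, d j) ∧
      w = ∑ j, f j (c j)} with hSB
  have hfiltuniv : univ.filter (fun j : Fin n => j.1 < n) = univ :=
    Finset.filter_true_of_mem (fun j _ => j.2)
  have hdtot : ∑ j, d j = ∑ i, r i := by
    have h3 := dsum_eq r hr d hd n le_rfl
    rw [hfiltuniv] at h3
    rw [h3]
    exact Finset.sum_congr rfl fun i _ => Nat.min_eq_left (hr i)
  have hAB : SA ⊆ SB := by
    rintro w ⟨A, h01, hrow, rfl⟩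
    set s : Fin n → ℕ := fun j => ∑ i, A i j with hs
    set σ : Equiv.Perm (Fin n) := Fin.revPerm.trans (Tuple.sort s) with hσ
    refine ⟨s, ⟨σ, ?_, ?_, ?_⟩, rfl⟩
    · exact (Tuple.monotone_sort s).comp_antitone (fun a b h => Fin.rev_le_rev.mpr h)
    · intro k hk1 hkn
      have himg : ∑ j ∈ univ.filter (fun j : Fin n => j.1 < k), s (σ j)
          = ∑ j ∈ (univ.filter (fun j : Fin n => j.1 < k)).image σ, s j :=
        (Finset.sum_image (fun x _ y _ h => σ.injective h)).symm
      have hcard : ((univ.filter (fun j : Fin n => j.1 < k)).image σ).card = k := by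
        rw [Finset.card_image_of_injective _ σ.injective, card_filter_lt]
        omega
      rw [himg]
      have hb := colsum_bound r A h01 hrow ((univ.filter (fun j : Fin n => j.1 < k)).image σ)
      rw [hcard] at hb
      rw [dsum_eq r hr d hd k hkn]
      exact hb
    · rw [hdtot, Finset.sum_comm]
      exact Finset.sum_congr rfl fun i _ => hrow i
  have hBA : SB ⊆ SA := by
    rintro w ⟨c, ⟨σ, hanti, hmajσ, htot⟩, rfl⟩
    have hmaj2 : ∀ k, k ≤ n → ParSum (fun j => c (σ j)) k ≤ ParSum d k := by
      intro k hk
      rcases Nat.eq_zero_or_pos k with h | h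
      · subst h
        rw [ParSum_zero, ParSum_zero]
      · exact hmajσ k h hk
    have hsum2 : ParSum (fun j => c (σ j)) n = ParSum d n := by
      rw [ParSum_ge _ n le_rfl, ParSum_ge d n le_rfl,
        show ∑ j, c (σ j) = ∑ j, c j from Equiv.sum_comp σ c]
      exact htot
    obtain ⟨A', h01', hrow', hcol'⟩ := realize r hr d hd _ (fun j => c (σ j)) hanti hmaj2 hsum2 le_rfl
    refine ⟨fun i j => A' i (σ.symm j), fun i j => h01' i (σ.symm j), ?_, ?_⟩
    · intro i
      rw [show ∑ j, A' i (σ.symm j) = ∑ j, A' i j from Equiv.sum_comp σ.symm (A' i)]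
      exact hrow' i
    · refine Finset.sum_congr rfl fun j _ => ?_
      congr 1
      rw [hcol' (σ.symm j), Equiv.apply_symm_apply]
  have hEq : SA = SB := Set.Subset.antisymm hAB hBA
  have hne : SA.Nonempty := by
    obtain ⟨A, h1, h2, _⟩ := canonical_matrix m n r hr d hd
    exact ⟨_, A, h1, h2, rfl⟩
  have hfin : SA.Finite := by
    have hsub : SA ⊆ Set.range
        (fun B : Fin m → Fin n → Bool => ∑ j, f j (∑ i, if B i j then 1 else 0)) := by
      rintro w ⟨A, h01, _, rfl⟩
      refine ⟨fun i j => decide (A i j = 1), ?_⟩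
      dsimp only
      refine Finset.sum_congr rfl fun j _ => ?_
      congr 1
      refine Finset.sum_congr rfl fun i _ => ?_
      rcases h01 i j with h | h <;> simp [h]
    exact Set.Finite.subset (Set.finite_range _) hsub
  obtain ⟨v, hv, hvmin⟩ := Set.exists_min_image SA id hfin hne
  refine ⟨v, ⟨hv, fun w hw => hvmin w hw⟩, ?_⟩
  rw [← hEq]
  exact ⟨hv, fun w hw => hvmin w hw⟩
end
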